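/- arXiv:1606.03281 — 3 statements merged into one kernel-verified Lean document; each statement's English description precedes it below -/
import Mathlib

section
/- For a sequence (p_k) in [0,1], independent Bernoulli(p_k) variables W_k, Y_n = (-1)^{W_1+...+W_n}, and any even number K = 2m of indices i_1 < i_2 < ... < i_K, one has E[Y_{i_1} Y_{i_2} ⋯ Y_{i_K}] = e_{i_1,i_2} · e_{i_3,i_4} ⋯ e_{i_{K-1}, i_K}, where e_{i,j} = ∏_{k=i+1}^{j} (1 - 2p_k). -/
open MeasureTheory ProbabilityTheory Finset

private lemma prod_range_two_mul' {M : Type*} [CommMonoid M] (m : ℕ) (f : ℕ → M) :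
    ∏ j ∈ range (2 * m), f j = ∏ l ∈ range m, (f (2 * l) * f (2 * l + 1)) := by
  induction m with
  | zero => simp
  | succ n ih =>
    rw [Nat.mul_succ, prod_range_succ, prod_range_succ, prod_range_succ, ih, mul_assoc]

private lemma integral_finset_prod_of_iIndep {Ω : Type*} [MeasurableSpace Ω] (μ : Measure Ω)
    [IsProbabilityMeasure μ] (g : ℕ → Ω → ℝ) (hmeas : ∀ k, Measurable (g k))
    (hindep : iIndepFun g μ)
    (hbdd : ∀ k ω, |g k ω| ≤ 1) (s : Finset ℕ) :
    ∫ ω, ∏ k ∈ s, g k ω ∂μ = ∏ k ∈ s, ∫ ω, g k ω ∂μ := by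
  classical
  have hint : ∀ (t : Finset ℕ), Integrable (fun ω => ∏ k ∈ t, g k ω) μ := by
    intro t
    refine Integrable.mono' (integrable_const 1)
      (Finset.measurable_prod t fun k _ => hmeas k).aestronglyMeasurable
      (Filter.Eventually.of_forall fun ω => ?_)
    calc ‖∏ k ∈ t, g k ω‖ = |∏ k ∈ t, g k ω| := rfl
    _ = ∏ k ∈ t, |g k ω| := Finset.abs_prod t _
    _ ≤ 1 := Finset.prod_le_one (fun k _ => abs_nonneg _) (fun k _ => hbdd k ω)
  induction s using Finset.induction with
  | empty => simp
  | @insert a s ha ih =>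
    have hfn : (fun ω => ∏ k ∈ s, g k ω) = ∏ j ∈ s, g j := by
      ext ω; rw [Finset.prod_apply]
    have hIndep : IndepFun (g a) (fun ω => ∏ k ∈ s, g k ω) μ := by
      rw [hfn]; exact (hindep.indepFun_finsetProd_of_notMem hmeas ha).symm
    have hga : Integrable (g a) μ := by
      refine Integrable.mono' (integrable_const 1) (hmeas a).aestronglyMeasurable
        (Filter.Eventually.of_forall fun ω => hbdd a ω)
    simp only [Finset.prod_insert ha]
    rw [show (∫ ω, g a ω * ∏ k ∈ s, g k ω ∂μ)
        = integral μ (g a * fun ω => ∏ k ∈ s, g k ω) from rfl,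
      hIndep.integral_mul_eq_mul_integral hga.aestronglyMeasurable (hint s).aestronglyMeasurable, ih]

theorem coin_turning_product_expectation
    {Ω : Type*} [MeasurableSpace Ω] (μ : Measure Ω) [IsProbabilityMeasure μ]
    (p : ℕ → ℝ) (hp : ∀ k, p k ∈ Set.Icc (0 : ℝ) 1)
    (W : ℕ → Ω → ℕ) (hWmeas : ∀ k, Measurable (W k))
    (hWrange : ∀ k ω, W k ω = 0 ∨ W k ω = 1)
    (hWindep : iIndepFun W μ)
    (hWp : ∀ k, μ {ω | W k ω = 1} = ENNReal.ofReal (p k))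
    (Y : ℕ → Ω → ℝ)
    (hY : ∀ n ω, Y n ω = (-1 : ℝ) ^ (∑ k ∈ Finset.Icc 1 n, W k ω))
    (e : ℕ → ℕ → ℝ)
    (he : ∀ i j, e i j = ∏ k ∈ Finset.Icc (i + 1) j, (1 - 2 * p k))
    (m : ℕ) (hm : 0 < m) (i : Fin (2 * m) → ℕ) (hi : StrictMono i) :
    ∫ ω, ∏ l : Fin (2 * m), Y (i l) ω ∂μ =
      ∏ l : Fin m, e (i ⟨2 * (l : ℕ), by omega⟩) (i ⟨2 * (l : ℕ) + 1, by omega⟩) := by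
  classical
  set g : ℕ → Ω → ℝ := fun k ω => (-1 : ℝ) ^ (W k ω) with hg
  set I : ℕ → ℕ := fun j => if h : j < 2 * m then i ⟨j, h⟩ else 0 with hI
  have hImono : ∀ a b : ℕ, a < b → b < 2 * m → I a < I b := by
    intro a b hab hb
    simp only [hI, dif_pos (hab.trans hb), dif_pos hb]
    exact hi (by exact hab)
  -- step 1: pointwise product identity
  have hpair : ∀ a b : ℕ, a ≤ b → ∀ ω, Y a ω * Y b ω = ∏ k ∈ Finset.Icc (a + 1) b, g k ω := by
    intro a b hab ω
    have hsplit : (∑ k ∈ Finset.Ioc 0 a, W k ω) + ∑ k ∈ Finset.Ioc a b, W k ω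
        = ∑ k ∈ Finset.Ioc 0 b, W k ω :=
      Finset.sum_Ioc_consecutive _ (Nat.zero_le a) hab
    have h1 : ∀ n : ℕ, Finset.Icc 1 n = Finset.Ioc 0 n := by
      intro n; ext x; simp [Nat.lt_iff_add_one_le]
    rw [hY, hY, h1, h1, ← hsplit, pow_add, ← mul_assoc, ← pow_add, ← two_mul, pow_mul]
    norm_num
    rw [show Finset.Icc (a+1) b = Finset.Ioc a b from by ext x; simp only [Finset.mem_Icc, Finset.mem_Ioc]; omega]
    rw [Finset.prod_pow_eq_pow_sum]
  -- the disjoint union of intervals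
  set T : Finset ℕ := (range m).biUnion (fun l => Finset.Icc (I (2*l) + 1) (I (2*l+1))) with hT
  have hdisj : Set.PairwiseDisjoint ↑(range m)
      (fun l => Finset.Icc (I (2*l) + 1) (I (2*l+1))) := by
    have key : ∀ a b : ℕ, a < b → b < m →
        Disjoint (Finset.Icc (I (2*a) + 1) (I (2*a+1))) (Finset.Icc (I (2*b) + 1) (I (2*b+1))) := by
      intro a b h hb
      refine Finset.disjoint_left.mpr fun x hxa hxb => ?_
      simp only [Finset.mem_Icc] at hxa hxb
      have := hImono (2*a+1) (2*b) (by omega) (by omega)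
      omega
    intro a ha b hb hab
    simp only [Finset.mem_coe, Finset.mem_range] at ha hb
    rcases lt_or_gt_of_ne hab with h | h
    · exact key a b h hb
    · exact (key b a h ha).symm
  -- pointwise: full product
  have hpoint : ∀ ω, ∏ l : Fin (2 * m), Y (i l) ω = ∏ k ∈ T, g k ω := by
    intro ω
    have h0 : ∏ l : Fin (2 * m), Y (i l) ω = ∏ j ∈ range (2 * m), Y (I j) ω := by
      rw [← Fin.prod_univ_eq_prod_range (fun j => Y (I j) ω) (2*m)]
      refine Finset.prod_congr rfl fun l _ => ?_
      simp only [hI, dif_pos l.isLt]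
    rw [h0, prod_range_two_mul', hT, Finset.prod_biUnion hdisj]
    refine Finset.prod_congr rfl fun l hl => ?_
    simp only [Finset.mem_range] at hl
    exact hpair _ _ (le_of_lt (hImono (2*l) (2*l+1) (by omega) (by omega))) ω
  have hgmeas : ∀ k, Measurable (g k) := fun k =>
    (measurable_from_top (f := fun n : ℕ => (-1:ℝ)^n)).comp (hWmeas k)
  have hgindep : iIndepFun g μ :=
    hWindep.comp (fun k => fun n : ℕ => (-1:ℝ)^n)
      (fun k => measurable_from_top)
  have hgbdd : ∀ k ω, |g k ω| ≤ 1 := by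
    intro k ω
    simp only [hg, abs_pow, abs_neg, abs_one, one_pow, le_refl]
  -- integral of each g k
  have hgint : ∀ k, ∫ ω, g k ω ∂μ = 1 - 2 * p k := by
    intro k
    have hmeasset : MeasurableSet {ω | W k ω = 1} := (hWmeas k) (measurableSet_singleton 1)
    have hrw : ∀ ω, g k ω = 1 - 2 * Set.indicator {ω | W k ω = 1} (fun _ => (1:ℝ)) ω := by
      intro ω
      rcases hWrange k ω with h | h <;>
        simp [hg, h, Set.indicator_apply, Set.mem_setOf_eq] <;> norm_num
    simp only [hrw]
    rw [integral_sub (integrable_const 1)]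
    · rw [integral_const, smul_eq_mul, probReal_univ, mul_one]
      rw [integral_const_mul, integral_indicator_const _ hmeasset]
      simp only [smul_eq_mul, mul_one, measureReal_def, hWp k, ENNReal.toReal_ofReal (hp k).1]
    · apply Integrable.const_mul
      exact (integrable_const (1:ℝ)).indicator hmeasset
  rw [integral_congr_ae (Filter.Eventually.of_forall hpoint),
    integral_finset_prod_of_iIndep μ g hgmeas hgindep hgbdd T]
  simp only [hgint]
  rw [hT, Finset.prod_biUnion hdisj]
  rw [← Fin.prod_univ_eq_prod_range (fun l => ∏ k ∈ Finset.Icc (I (2*l) + 1) (I (2*l+1)), (1 - 2 * p k)) m]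
  refine Finset.prod_congr rfl fun l _ => ?_
  rw [he]
  congr 1 <;> simp only [hI, dif_pos (show 2*(l:ℕ) < 2*m by omega), dif_pos (show 2*(l:ℕ)+1 < 2*m by omega)]
end

section
/- Let p_n = 1/n for n ≥ 2 and p_1 = 1/2, let W_n be independent Bernoulli(p_n), and Y_n = (-1)^{W_1 + ... + W_n}, S_N = Y_1 + ... + Y_N. Then for every positive integer K, lim_{N→∞} E[(S_N/N)^K] equals 0 if K is odd and 1/(K+1) if K is even. -/
open MeasureTheory ProbabilityTheory Finset Filter
open scoped Topology

lemma ctm_sum_pow (k : ℕ) :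
    Tendsto (fun N : ℕ => (∑ m ∈ range N, (m : ℝ) ^ k) / (N : ℝ) ^ (k + 1)) atTop
      (𝓝 (1 / ((k : ℝ) + 1))) := by
  have hmono : ∀ N : ℕ, MonotoneOn (fun x : ℝ => x ^ k) (Set.Icc (0:ℝ) (0 + N)) := by
    intro N x hx y hy hxy
    exact pow_le_pow_left₀ hx.1 hxy k
  have hup : ∀ N : ℕ, (∑ m ∈ range N, (m : ℝ) ^ k) ≤ (N : ℝ) ^ (k + 1) / ((k:ℝ) + 1) := by
    intro N
    have h1 := (hmono N).sum_le_integral (x₀ := (0:ℝ)) (a := N) (f := fun x : ℝ => x ^ k)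
    simp only [zero_add] at h1
    calc (∑ m ∈ range N, (m : ℝ) ^ k) ≤ ∫ x in (0:ℝ)..(N:ℝ), x ^ k := by simpa using h1
    _ = (N : ℝ) ^ (k + 1) / ((k:ℝ) + 1) := by rw [integral_pow]; push_cast; ring
  have hlow : ∀ N : ℕ, (N : ℝ) ^ (k + 1) / ((k:ℝ) + 1) - (N:ℝ) ^ k ≤ ∑ m ∈ range N, (m : ℝ) ^ k := by
    intro N
    have h1 := (hmono N).integral_le_sum (x₀ := (0:ℝ)) (a := N) (f := fun x : ℝ => x ^ k)
    simp only [zero_add] at h1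
    have h2 : (∫ x in (0:ℝ)..(N:ℝ), x ^ k) = (N : ℝ) ^ (k + 1) / ((k:ℝ) + 1) := by
      rw [integral_pow]; push_cast; ring
    have e1 := Finset.sum_range_succ' (fun i : ℕ => ((i:ℝ)) ^ k) N
    have e2 : (∑ i ∈ range (N+1), ((i:ℝ)) ^ k) = (∑ i ∈ range N, ((i:ℝ)) ^ k) + (N:ℝ)^k :=
      Finset.sum_range_succ _ N
    have h0 : (0:ℝ) ≤ (0:ℝ)^k := by positivity
    have h3 : (∑ i ∈ range N, ((((i:ℕ)+1 : ℕ)):ℝ) ^ k)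
        = (∑ i ∈ range N, ((i:ℝ)) ^ k) + (N:ℝ)^k - ((0:ℕ):ℝ)^k := by
      simp only [e1] at e2
      linarith
    have h4 : (∫ x in (0:ℝ)..(N:ℝ), x ^ k) ≤ ∑ i ∈ range N, (((i:ℕ)+1 : ℕ):ℝ) ^ k := by
      refine le_trans h1 (le_of_eq (Finset.sum_congr rfl ?_))
      intro i _
      push_cast
      ring
    rw [h2, h3] at h4
    have h5 : (0:ℝ) ≤ ((0:ℕ):ℝ)^k := by positivity
    linarith
  apply tendsto_of_tendsto_of_tendsto_of_le_of_le'
      (g := fun N : ℕ => 1 / ((k:ℝ) + 1) - 1 / (N:ℝ)) (h := fun _ : ℕ => 1 / ((k:ℝ) + 1))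
  · have h5 : Tendsto (fun N : ℕ => 1 / (N:ℝ)) atTop (𝓝 0) := tendsto_one_div_atTop_nhds_zero_nat
    simpa using (tendsto_const_nhds (x := 1 / ((k:ℝ)+1))).sub h5
  · exact tendsto_const_nhds
  · filter_upwards [eventually_ge_atTop 1] with N hN
    have hNpos : (0:ℝ) < (N:ℝ) := by exact_mod_cast hN
    have hpow : (0:ℝ) < (N:ℝ) ^ (k+1) := by positivity
    rw [le_div_iff₀ hpow]
    have hs : (1 / ((k:ℝ)+1) - 1 / (N:ℝ)) * (N:ℝ)^(k+1)
        = (N:ℝ)^(k+1)/((k:ℝ)+1) - (N:ℝ)^k := by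
      rw [pow_succ]
      have hk : (0:ℝ) < (k:ℝ) + 1 := by positivity
      field_simp
    rw [hs]
    exact hlow N
  · filter_upwards [eventually_ge_atTop 1] with N hN
    have hNpos : (0:ℝ) < (N:ℝ) := by exact_mod_cast hN
    have hpow : (0:ℝ) < (N:ℝ) ^ (k+1) := by positivity
    rw [div_le_iff₀ hpow]
    calc (∑ m ∈ range N, (m : ℝ) ^ k) ≤ (N : ℝ) ^ (k + 1) / ((k:ℝ) + 1) := hup N
    _ = 1 / ((k:ℝ)+1) * (N:ℝ)^(k+1) := by ring

lemma ctm_weighted_zero {f : ℕ → ℝ} (k : ℕ) (hf : Tendsto f atTop (𝓝 (0:ℝ))) :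
    Tendsto (fun N : ℕ => (∑ m ∈ range N, f m * (m:ℝ) ^ k) / (N : ℝ) ^ (k + 1)) atTop
      (𝓝 (0:ℝ)) := by
  have habs : Tendsto (fun m => |f m|) atTop (𝓝 (0:ℝ)) := by
    simpa using hf.abs
  have hces := habs.cesaro
  apply squeeze_zero_norm' (a := fun N : ℕ => (∑ m ∈ range N, |f m|) / (N:ℝ))
  · filter_upwards [eventually_ge_atTop 1] with N hN
    have hNpos : (0:ℝ) < (N:ℝ) := by exact_mod_cast hN
    have h1 : ‖(∑ m ∈ range N, f m * (m:ℝ) ^ k)‖ ≤ ∑ m ∈ range N, |f m| * (N:ℝ)^k := by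
      refine le_trans (norm_sum_le _ _) (Finset.sum_le_sum ?_)
      intro i hi
      have hiN : (i:ℝ) ≤ (N:ℝ) := by
        exact_mod_cast le_of_lt (Finset.mem_range.mp hi)
      have : ‖f i * (i:ℝ)^k‖ = |f i| * |(i:ℝ)^k| := by
        rw [norm_mul]; rfl
      rw [this]
      have h2 : |(i:ℝ)^k| ≤ (N:ℝ)^k := by
        rw [abs_pow]
        refine pow_le_pow_left₀ (abs_nonneg _) ?_ k
        rw [abs_of_nonneg (Nat.cast_nonneg i)]; exact hiN
      exact mul_le_mul_of_nonneg_left h2 (abs_nonneg _)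
    have hpow : (0:ℝ) < (N:ℝ) ^ (k+1) := by positivity
    rw [norm_div, Real.norm_eq_abs ((N:ℝ)^(k+1)), abs_of_pos hpow, div_le_div_iff₀ hpow hNpos]
    calc ‖(∑ m ∈ range N, f m * (m:ℝ) ^ k)‖ * (N:ℝ)
        ≤ (∑ m ∈ range N, |f m| * (N:ℝ)^k) * (N:ℝ) := by
          exact mul_le_mul_of_nonneg_right h1 (le_of_lt hNpos)
      _ = (∑ m ∈ range N, |f m|) * (N:ℝ)^(k+1) := by
          rw [← Finset.sum_mul, pow_succ]
          ring
  · simpa [inv_mul_eq_div] using hces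

lemma ctm_stolz {k : ℕ} {c : ℝ} {d : ℕ → ℝ}
    (h : Tendsto (fun m : ℕ => d m / (m:ℝ) ^ k) atTop (𝓝 c)) :
    Tendsto (fun N : ℕ => (∑ m ∈ range N, d m) / (N : ℝ) ^ (k + 1)) atTop
      (𝓝 (c / ((k:ℝ) + 1))) := by
  set f : ℕ → ℝ := fun m => d m / (m:ℝ)^k - c with hfdef
  have hf : Tendsto f atTop (𝓝 0) := by
    simpa [hfdef] using h.sub (tendsto_const_nhds (x := c))
  have key : ∀ N : ℕ, 1 ≤ N →
      (∑ m ∈ range N, d m)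
        = (∑ m ∈ range N, f m * (m:ℝ)^k) + c * (∑ m ∈ range N, (m:ℝ)^k)
          + (d 0 - (f 0 * (0:ℝ)^k + c * (0:ℝ)^k)) := by
    intro N hN
    have : ∀ m : ℕ, 1 ≤ m → d m = f m * (m:ℝ)^k + c * (m:ℝ)^k := by
      intro m hm
      have hm0 : ((m:ℝ))^k ≠ 0 := by
        have : (0:ℝ) < (m:ℝ) := by exact_mod_cast hm
        positivity
      simp only [hfdef]; rw [sub_mul, div_mul_cancel₀ _ hm0]
      ring
    induction N with
    | zero => omega
    | succ n ih =>
      rcases Nat.eq_or_lt_of_le hN with h1 | h1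
      · simp only [← h1]
        simp [Finset.sum_range_succ]
        try ring
      · have hn : 1 ≤ n := by omega
        rw [Finset.sum_range_succ, ih hn, Finset.sum_range_succ, Finset.sum_range_succ,
          this n hn]
        ring
  have h1 : Tendsto (fun N : ℕ => (∑ m ∈ range N, f m * (m:ℝ)^k) / (N:ℝ)^(k+1)) atTop (𝓝 0) :=
    ctm_weighted_zero k hf
  have h2 : Tendsto (fun N : ℕ => c * ((∑ m ∈ range N, (m:ℝ)^k) / (N:ℝ)^(k+1))) atTop
      (𝓝 (c * (1/((k:ℝ)+1)))) := (ctm_sum_pow k).const_mul c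
  have h3 : Tendsto (fun N : ℕ => (d 0 - (f 0 * (0:ℝ)^k + c * (0:ℝ)^k)) / (N:ℝ)^(k+1)) atTop
      (𝓝 0) := by
    apply Tendsto.div_atTop (tendsto_const_nhds)
    exact (tendsto_pow_atTop (Nat.succ_ne_zero k)).comp tendsto_natCast_atTop_atTop
  have hev : (fun N : ℕ => (∑ m ∈ range N, d m) / (N:ℝ)^(k+1))
      =ᶠ[atTop] (fun N : ℕ => (∑ m ∈ range N, f m * (m:ℝ)^k) / (N:ℝ)^(k+1)
        + c * ((∑ m ∈ range N, (m:ℝ)^k) / (N:ℝ)^(k+1))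
        + (d 0 - (f 0 * (0:ℝ)^k + c * (0:ℝ)^k)) / (N:ℝ)^(k+1)) := by
    filter_upwards [eventually_ge_atTop 1] with N hN
    rw [key N hN]
    ring
  have hfinal : Tendsto (fun N : ℕ => (∑ m ∈ range N, d m) / (N:ℝ)^(k+1)) atTop
      (𝓝 (0 + c * (1/((k:ℝ)+1)) + 0)) := Tendsto.congr' hev.symm ((h1.add h2).add h3)
  convert hfinal using 2
  ring

noncomputable def ctmA : ℕ → ℝ := fun a => if Even a then 1 / ((a : ℝ) + 1) else 0

noncomputable def ctmB : ℕ → ℝ := fun a => (a : ℝ) * ctmA (a - 1) / ((a : ℝ) + 2)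

lemma ctmB_eq {a : ℕ} (ha : 1 ≤ a) : ctmB (a - 1) = ctmA a := by
  obtain ⟨m, rfl⟩ : ∃ m, a = m + 1 := ⟨a - 1, by omega⟩
  simp only [Nat.add_sub_cancel, ctmB, ctmA]
  rcases m with - | l
  · norm_num
  · simp only [Nat.add_sub_cancel]
    have hiff : Even (l + 1 + 1) ↔ Even l := by
      constructor
      · rintro ⟨t, ht⟩; exact ⟨t - 1, by omega⟩
      · rintro ⟨t, ht⟩; exact ⟨t + 1, by omega⟩
    by_cases hl : Even l
    · rw [if_pos hl, if_pos (hiff.mpr hl)]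
      push_cast
      have h1 : ((l:ℝ) + 1) ≠ 0 := by positivity
      have h2 : ((l:ℝ) + 1 + 1 + 2) ≠ 0 := by positivity
      have h3 : ((l:ℝ) + 1 + 1 + 1) ≠ 0 := by positivity
      field_simp
      ring
    · rw [if_neg hl, if_neg (fun h => hl (hiff.mp h))]
      simp

lemma ctm_tendsto_shift_div (r : ℝ) :
    Tendsto (fun N : ℕ => ((N : ℝ) + r) / (N : ℝ)) atTop (𝓝 1) := by
  have h1 : Tendsto (fun N : ℕ => (N : ℝ)) atTop atTop := tendsto_natCast_atTop_atTop
  have h2 : Tendsto (fun N : ℕ => r / (N : ℝ)) atTop (𝓝 0) :=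
    Tendsto.div_atTop tendsto_const_nhds h1
  have h3 : Tendsto (fun N : ℕ => 1 + r / (N : ℝ)) atTop (𝓝 (1 + 0)) :=
    tendsto_const_nhds.add h2
  rw [add_zero] at h3
  apply h3.congr'
  filter_upwards [eventually_ge_atTop 1] with N hN
  have : (N : ℝ) ≠ 0 := by
    have : (0:ℝ) < (N:ℝ) := by exact_mod_cast hN
    positivity
  field_simp

lemma ctm_u_machine {u : ℕ → ℝ} {a : ℕ} (ha : 1 ≤ a) {c : ℝ}
    (hd : Tendsto (fun N : ℕ => (u (N + 1) - u N) * (N : ℝ) / (N : ℝ) ^ a) atTop (𝓝 c)) :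
    Tendsto (fun N : ℕ => u N / (N : ℝ) ^ a) atTop (𝓝 (c / (a : ℝ))) := by
  obtain ⟨k, rfl⟩ : ∃ k, a = k + 1 := ⟨a - 1, by omega⟩
  have hd' : Tendsto (fun m : ℕ => (u (m + 1) - u m) / (m : ℝ) ^ k) atTop (𝓝 c) := by
    apply hd.congr'
    filter_upwards [eventually_ge_atTop 1] with m hm
    have hm0 : (m : ℝ) ≠ 0 := by
      have : (0:ℝ) < (m:ℝ) := by exact_mod_cast hm
      positivity
    rw [pow_succ]
    field_simp
  have hst := ctm_stolz (k := k) hd'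
  have hsum : ∀ N : ℕ, (∑ m ∈ range N, (u (m + 1) - u m)) = u N - u 0 :=
    fun N => Finset.sum_range_sub u N
  simp only [hsum] at hst
  have h0 : Tendsto (fun N : ℕ => u 0 / (N : ℝ) ^ (k + 1)) atTop (𝓝 0) :=
    Tendsto.div_atTop tendsto_const_nhds
      ((tendsto_pow_atTop k.succ_ne_zero).comp tendsto_natCast_atTop_atTop)
  have hfin := hst.add h0
  rw [add_zero] at hfin
  have heq : (fun N : ℕ => (u N - u 0) / (N : ℝ) ^ (k + 1) + u 0 / (N : ℝ) ^ (k + 1))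
      = fun N : ℕ => u N / (N : ℝ) ^ (k + 1) := by
    funext N
    rw [← add_div]
    ring_nf
  rw [heq] at hfin
  convert hfin using 2
  push_cast
  ring

set_option maxHeartbeats 800000 in
lemma ctm_v_machine {v g : ℕ → ℝ} {a : ℕ} {c : ℝ}
    (hrec : ∀ N : ℕ, 1 ≤ N → v (N + 1) = (((N : ℝ) - 1) / ((N : ℝ) + 1)) * v N + g N)
    (hg : Tendsto (fun N : ℕ => (N : ℝ) * g N / (N : ℝ) ^ a) atTop (𝓝 c)) :
    Tendsto (fun N : ℕ => v N / (N : ℝ) ^ a) atTop (𝓝 (c / ((a : ℝ) + 2))) := by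
  set w : ℕ → ℝ := fun N => (N : ℝ) * ((N : ℝ) - 1) * v N with hw
  have hd : ∀ N : ℕ, 1 ≤ N → w (N + 1) - w N = (N : ℝ) * ((N : ℝ) + 1) * g N := by
    intro N hN
    have hne : ((N : ℝ) + 1) ≠ 0 := by positivity
    have hr : ((N:ℝ) + 1) * (((N : ℝ) - 1) / ((N : ℝ) + 1)) = (N:ℝ) - 1 :=
      mul_div_cancel₀ _ hne
    simp only [hw]
    rw [hrec N hN]
    push_cast
    linear_combination (N:ℝ) * v N * hr
  have hd2 : Tendsto (fun m : ℕ => (w (m + 1) - w m) / (m : ℝ) ^ (a + 1)) atTop (𝓝 c) := by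
    have h1 : Tendsto (fun m : ℕ => ((m : ℝ) + 1) / (m : ℝ)) atTop (𝓝 1) :=
      ctm_tendsto_shift_div 1
    have h2 := h1.mul hg
    rw [one_mul] at h2
    apply h2.congr'
    filter_upwards [eventually_ge_atTop 1] with m hm
    have hm0 : (m : ℝ) ≠ 0 := by
      have : (0:ℝ) < (m:ℝ) := by exact_mod_cast hm
      positivity
    rw [hd m hm, pow_succ]
    field_simp
  have hst := ctm_stolz (k := a + 1) hd2
  have hsum : ∀ N : ℕ, (∑ m ∈ range N, (w (m + 1) - w m)) = w N - w 0 :=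
    fun N => Finset.sum_range_sub w N
  have hw0 : w 0 = 0 := by simp [hw]
  simp only [hsum, hw0, sub_zero] at hst
  have hquot : Tendsto (fun N : ℕ => (N : ℝ) / ((N : ℝ) - 1)) atTop (𝓝 1) := by
    have h1 : Tendsto (fun N : ℕ => ((N : ℝ) - 1)) atTop atTop :=
      tendsto_atTop_add_const_right _ (-1) tendsto_natCast_atTop_atTop |>.congr (by
        intro N; ring)
    have h2 : Tendsto (fun N : ℕ => ((N : ℝ) - 1)⁻¹) atTop (𝓝 0) := h1.inv_tendsto_atTop
    have h3 : Tendsto (fun N : ℕ => 1 + ((N : ℝ) - 1)⁻¹) atTop (𝓝 (1 + 0)) :=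
      tendsto_const_nhds.add h2
    rw [add_zero] at h3
    apply h3.congr'
    filter_upwards [eventually_ge_atTop 2] with N hN
    have hN1 : ((N : ℝ) - 1) ≠ 0 := by
      have : (2:ℝ) ≤ (N:ℝ) := by exact_mod_cast hN
      nlinarith
    field_simp
    ring
  have hfin := hst.mul hquot
  rw [mul_one] at hfin
  have : Tendsto (fun N : ℕ => v N / (N : ℝ) ^ a) atTop
      (𝓝 (c / (((a : ℕ) + 1 : ℕ) + 1 : ℝ))) := by
    apply hfin.congr'
    filter_upwards [eventually_ge_atTop 2] with N hN
    have hNpos : (0:ℝ) < (N:ℝ) := by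
      have : (2:ℝ) ≤ (N:ℝ) := by exact_mod_cast hN
      linarith
    have hN1 : ((N : ℝ) - 1) ≠ 0 := by
      have : (2:ℝ) ≤ (N:ℝ) := by exact_mod_cast hN
      nlinarith
    have hN0 : (N : ℝ) ≠ 0 := ne_of_gt hNpos
    have h4 : (0:ℝ) < (N:ℝ) ^ (a + 1 + 1) * ((N:ℝ) - 1) := by
      apply mul_pos (by positivity)
      have : (2:ℝ) ≤ (N:ℝ) := by exact_mod_cast hN
      nlinarith
    simp only [hw]
    rw [div_mul_div_comm, div_eq_div_iff (ne_of_gt h4) (by positivity)]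
    ring
  convert this using 2
  push_cast
  ring

theorem coin_turning_moment_limit
    {Ω : Type*} [MeasurableSpace Ω] (μ : Measure Ω) [IsProbabilityMeasure μ]
    (p : ℕ → ℝ) (hp1 : p 1 = 1 / 2) (hpn : ∀ n, 2 ≤ n → p n = 1 / n)
    (W : ℕ → Ω → ℕ) (hWmeas : ∀ k, Measurable (W k))
    (hWrange : ∀ k ω, W k ω = 0 ∨ W k ω = 1)
    (hWindep : iIndepFun W μ)
    (hWp : ∀ k, μ {ω | W k ω = 1} = ENNReal.ofReal (p k))
    (Y : ℕ → Ω → ℝ)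
    (hY : ∀ n ω, Y n ω = (-1 : ℝ) ^ (∑ k ∈ Finset.Icc 1 n, W k ω))
    (S : ℕ → Ω → ℝ) (hS : ∀ N ω, S N ω = ∑ n ∈ Finset.Icc 1 N, Y n ω)
    (K : ℕ) (hK : 0 < K) :
    Tendsto (fun N : ℕ => ∫ ω, (S N ω / N) ^ K ∂μ) atTop
      (nhds (if Even K then 1 / (K + 1) else 0)) := by
  classical
  have hYmeas : ∀ n, Measurable (Y n) := by
    intro n
    have h : Y n = fun ω => (-1 : ℝ) ^ (∑ k ∈ Finset.Icc 1 n, W k ω) := funext (hY n)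
    rw [h]
    exact (measurable_of_countable fun t : ℕ => (-1:ℝ) ^ t).comp
      (Finset.measurable_sum _ fun k _ => hWmeas k)
  have hSmeas : ∀ N, Measurable (S N) := by
    intro N
    have h : S N = fun ω => ∑ n ∈ Finset.Icc 1 N, Y n ω := funext (hS N)
    rw [h]
    exact Finset.measurable_sum _ fun n _ => hYmeas n
  have hYabs : ∀ n ω, |Y n ω| = 1 := by
    intro n ω; rw [hY, abs_pow, abs_neg, abs_one, one_pow]
  have hSabs : ∀ N ω, |S N ω| ≤ (N : ℝ) := by
    intro N ω
    rw [hS]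
    calc |∑ n ∈ Finset.Icc 1 N, Y n ω| ≤ ∑ n ∈ Finset.Icc 1 N, |Y n ω| :=
        Finset.abs_sum_le_sum_abs _ _
    _ = ∑ n ∈ Finset.Icc 1 N, (1:ℝ) := Finset.sum_congr rfl fun n _ => hYabs n ω
    _ = (N : ℝ) := by simp [Nat.card_Icc]
  have hInt : ∀ (f : Ω → ℝ) (C : ℝ), Measurable f → (∀ ω, |f ω| ≤ C) → Integrable f μ := by
    intro f C hm hb
    exact (integrable_const C).mono' hm.aestronglyMeasurable
      (ae_of_all μ fun ω => by simpa [Real.norm_eq_abs] using hb ω)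
  set M : ℕ → ℕ → ℕ → ℝ := fun b a N => ∫ ω, S N ω ^ a * Y N ω ^ b ∂μ with hM
  have hMabs : ∀ b a N ω, |S N ω ^ a * Y N ω ^ b| ≤ (N:ℝ) ^ a := by
    intro b a N ω
    rw [abs_mul, abs_pow, abs_pow, hYabs, one_pow, mul_one]
    exact pow_le_pow_left₀ (abs_nonneg _) (hSabs N ω) a
  have hMint : ∀ b a N, Integrable (fun ω => S N ω ^ a * Y N ω ^ b) μ := fun b a N =>
    hInt _ _ (((hSmeas N).pow_const a).mul ((hYmeas N).pow_const b)) (hMabs b a N)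
  have hMbound : ∀ b a N, |M b a N| ≤ (N:ℝ) ^ a := by
    intro b a N
    have h := norm_integral_le_of_norm_le_const (μ := μ)
      (f := fun ω => S N ω ^ a * Y N ω ^ b) (C := (N:ℝ)^a)
      (ae_of_all μ fun ω => by rw [Real.norm_eq_abs]; exact hMabs b a N ω)
    rw [Real.norm_eq_abs] at h
    simpa [measure_univ] using h
  have hppos : ∀ k, 1 ≤ k → 0 ≤ p k := by
    intro k hk
    rcases Nat.lt_or_ge k 2 with h | h
    · interval_cases k
      rw [hp1]; norm_num
    · rw [hpn k h]; positivity
  have hEps : ∀ k, 1 ≤ k → ∫ ω, (-1:ℝ) ^ (W k ω) ∂μ = 1 - 2 * p k := by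
    intro k hk
    have hmeas1 : MeasurableSet {ω | W k ω = 1} := hWmeas k (measurableSet_singleton 1)
    have hpt : (fun ω => (-1:ℝ) ^ (W k ω))
        = fun ω => 1 - 2 * Set.indicator {ω' | W k ω' = 1} (fun _ => (1:ℝ)) ω := by
      funext ω
      rcases hWrange k ω with h | h
      · simp [h, Set.indicator_apply]
      · simp only [h, Set.indicator_apply, Set.mem_setOf_eq, if_pos, pow_one]
        norm_num
    have hind : Integrable (Set.indicator {ω' | W k ω' = 1} (fun _ => (1:ℝ))) μ :=
      (integrable_const (1:ℝ)).indicator hmeas1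
    rw [hpt, integral_sub (integrable_const 1) (hind.const_mul 2), integral_const,
      integral_const_mul, integral_indicator_const _ hmeas1, measureReal_def, measureReal_def, hWp k,
      ENNReal.toReal_ofReal (hppos k hk)]
    simp [measure_univ]
  have hIndepInt : ∀ N a b, (∫ ω, S N ω ^ a * Y N ω ^ b * (-1:ℝ) ^ (W (N+1) ω) ∂μ)
      = M b a N * ∫ ω, (-1:ℝ) ^ (W (N+1) ω) ∂μ := by
    intro N a b
    have hdisj : Disjoint (Finset.Icc 1 N) ({N+1} : Finset ℕ) := by
      rw [Finset.disjoint_singleton_right, Finset.mem_Icc]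
      omega
    have hbase := hWindep.indepFun_finset (Finset.Icc 1 N) {N+1} hdisj hWmeas
    set φ : (↥(Finset.Icc 1 N) → ℕ) → ℝ := fun w =>
      (∑ n ∈ Finset.Icc 1 N, (-1:ℝ) ^ (∑ k ∈ Finset.Icc 1 n,
        if h : k ∈ Finset.Icc 1 N then w ⟨k, h⟩ else 0)) ^ a *
      ((-1:ℝ) ^ (∑ k ∈ Finset.Icc 1 N,
        if h : k ∈ Finset.Icc 1 N then w ⟨k, h⟩ else 0)) ^ b with hφdef
    set ψ : (↥({N+1} : Finset ℕ) → ℕ) → ℝ := fun w =>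
      (-1:ℝ) ^ (w ⟨N+1, Finset.mem_singleton_self _⟩) with hψdef
    have hcomp := hbase.comp (measurable_of_countable φ) (measurable_of_countable ψ)
    have hφeq : (φ ∘ fun ω (i : ↥(Finset.Icc 1 N)) => W i ω)
        = fun ω => S N ω ^ a * Y N ω ^ b := by
      funext ω
      simp only [Function.comp_apply, hφdef]
      have hsum : ∀ n, n ∈ Finset.Icc 1 N →
          (∑ k ∈ Finset.Icc 1 n,
            if h : k ∈ Finset.Icc 1 N then W (⟨k, h⟩ : ↥(Finset.Icc 1 N)).1 ω else 0)
          = ∑ k ∈ Finset.Icc 1 n, W k ω := by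
        intro n hn
        apply Finset.sum_congr rfl
        intro k hk
        rw [Finset.mem_Icc] at hn hk
        rw [dif_pos (Finset.mem_Icc.mpr ⟨hk.1, hk.2.trans hn.2⟩)]
      have hsum2 : (∑ k ∈ Finset.Icc 1 N,
          if h : k ∈ Finset.Icc 1 N then W (⟨k, h⟩ : ↥(Finset.Icc 1 N)).1 ω else 0)
          = ∑ k ∈ Finset.Icc 1 N, W k ω := by
        apply Finset.sum_congr rfl
        intro k hk
        rw [dif_pos hk]
      have h1 : (∑ n ∈ Finset.Icc 1 N, (-1:ℝ) ^ (∑ k ∈ Finset.Icc 1 n,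
          if h : k ∈ Finset.Icc 1 N then W (⟨k, h⟩ : ↥(Finset.Icc 1 N)).1 ω else 0))
          = S N ω := by
        rw [hS]
        apply Finset.sum_congr rfl
        intro n hn
        rw [hsum n hn, hY]
      rw [h1, hsum2, ← hY]
    have hψeq : (ψ ∘ fun ω (i : ↥({N+1} : Finset ℕ)) => W i ω)
        = fun ω => (-1:ℝ) ^ (W (N+1) ω) := rfl
    rw [hφeq, hψeq] at hcomp
    have h1 : AEStronglyMeasurable (fun ω => S N ω ^ a * Y N ω ^ b) μ :=
      (hMint b a N).aestronglyMeasurable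
    have h2 : AEStronglyMeasurable (fun ω => (-1:ℝ) ^ (W (N+1) ω)) μ :=
      ((measurable_of_countable fun t : ℕ => (-1:ℝ)^t).comp (hWmeas (N+1))).aestronglyMeasurable
    have h3 := hcomp.integral_mul_eq_mul_integral h1 h2
    simpa [hM] using h3
  have hpow_parity : ∀ (t m : ℕ), ((-1:ℝ) ^ t) ^ m = ((-1:ℝ) ^ t) ^ (m % 2) := by
    intro t m
    have hcomm : ∀ m' : ℕ, ((-1:ℝ) ^ t) ^ m' = ((-1:ℝ) ^ m') ^ t := by
      intro m'; rw [← pow_mul, mul_comm, pow_mul]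
    rw [hcomm, hcomm (m % 2)]
    congr 1
    rcases Nat.even_or_odd m with hm | hm
    · rw [hm.neg_one_pow, Nat.even_iff.mp hm, pow_zero]
    · rw [hm.neg_one_pow, Nat.odd_iff.mp hm, pow_one]
  have hYmod : ∀ n ω m, Y n ω ^ m = Y n ω ^ (m % 2) := by
    intro n ω m
    rw [hY]
    exact hpow_parity _ m
  have hrecD : ∀ a b N, 1 ≤ N → M b a (N+1)
      = ∑ i ∈ Finset.range (a+1), (a.choose i : ℝ) *
          ((if Even (i+b) then (1:ℝ) else ((N:ℝ)-1)/((N:ℝ)+1)) * M ((i+b) % 2) (a-i) N) := by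
    intro a b N hN
    have hSrec : ∀ ω, S (N+1) ω = S N ω + Y (N+1) ω := by
      intro ω; rw [hS, hS, Finset.sum_Icc_succ_top (by omega : 1 ≤ N+1)]
    have hYrec : ∀ ω, Y (N+1) ω = Y N ω * (-1:ℝ) ^ (W (N+1) ω) := by
      intro ω; rw [hY, hY, Finset.sum_Icc_succ_top (by omega : 1 ≤ N+1), pow_add]
    have hEpsVal : ∫ ω, (-1:ℝ) ^ (W (N+1) ω) ∂μ = ((N:ℝ)-1)/((N:ℝ)+1) := by
      rw [hEps (N+1) (by omega), hpn (N+1) (by omega)]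
      have hne : ((N:ℝ)+1) ≠ 0 := by positivity
      push_cast
      field_simp
      ring
    have hEmod : ∀ ω m, ((-1:ℝ) ^ (W (N+1) ω)) ^ m = ((-1:ℝ) ^ (W (N+1) ω)) ^ (m % 2) :=
      fun ω m => hpow_parity _ m
    have hptw : ∀ ω, S (N+1) ω ^ a * Y (N+1) ω ^ b
        = ∑ i ∈ Finset.range (a+1), (a.choose i : ℝ) *
            (S N ω ^ (a-i) * (Y N ω ^ ((i+b) % 2) * ((-1:ℝ) ^ (W (N+1) ω)) ^ ((i+b) % 2))) := by
      intro ω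
      rw [hSrec ω, hYrec ω, add_comm (S N ω), add_pow]
      rw [Finset.sum_mul]
      apply Finset.sum_congr rfl
      intro i hi
      rw [show (Y N ω * (-1:ℝ)^(W (N+1) ω)) ^ i * S N ω ^ (a-i) * (a.choose i : ℝ)
            * (Y N ω * (-1:ℝ)^(W (N+1) ω)) ^ b
          = (a.choose i : ℝ) * (S N ω ^ (a-i) * ((Y N ω * (-1:ℝ)^(W (N+1) ω)) ^ i
            * (Y N ω * (-1:ℝ)^(W (N+1) ω)) ^ b)) from by ring,
        ← pow_add, mul_pow, hYmod, hEmod]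
    have hMeq : M b a (N+1) = ∫ ω, (∑ i ∈ Finset.range (a+1), (a.choose i : ℝ) *
        (S N ω ^ (a-i) * (Y N ω ^ ((i+b) % 2) * ((-1:ℝ) ^ (W (N+1) ω)) ^ ((i+b) % 2)))) ∂μ := by
      simp only [hM]
      exact integral_congr_ae (ae_of_all _ hptw)
    rw [hMeq, integral_finset_sum]
    · apply Finset.sum_congr rfl
      intro i hi
      rw [integral_const_mul]
      congr 1
      rcases Nat.even_or_odd (i + b) with he | he
      · rw [Nat.even_iff.mp he] at *
        rw [if_pos he, one_mul]
        simp only [hM, pow_zero, mul_one]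
      · rw [Nat.odd_iff.mp he] at *
        rw [if_neg (by simpa using (Nat.not_even_iff_odd.mpr he))]
        simp only [pow_one]
        calc ∫ ω, S N ω ^ (a-i) * (Y N ω * (-1:ℝ)^(W (N+1) ω)) ∂μ
            = ∫ ω, S N ω ^ (a-i) * Y N ω ^ 1 * (-1:ℝ)^(W (N+1) ω) ∂μ := by
              apply integral_congr_ae (ae_of_all _ _)
              intro ω
              rw [pow_one]
              ring
          _ = M 1 (a-i) N * ∫ ω, (-1:ℝ)^(W (N+1) ω) ∂μ := hIndepInt N (a-i) 1
          _ = ((N:ℝ)-1)/((N:ℝ)+1) * M 1 (a-i) N := by rw [hEpsVal]; ring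
    · intro i hi
      apply hInt _ ((a.choose i : ℝ) * (N:ℝ)^(a-i))
      · exact measurable_const.mul (((hSmeas N).pow_const _).mul
          (((hYmeas N).pow_const _).mul
            (((measurable_of_countable fun t : ℕ => (-1:ℝ)^t).comp (hWmeas (N+1))).pow_const _)))
      · intro ω
        have hE1 : |(-1:ℝ) ^ (W (N+1) ω)| = 1 := by
          rw [abs_pow, abs_neg, abs_one, one_pow]
        rw [abs_mul, abs_of_nonneg (by positivity : (0:ℝ) ≤ (a.choose i : ℝ))]
        apply mul_le_mul_of_nonneg_left _ (by positivity)
        have hY2 : |Y N ω ^ ((i+b)%2)| = 1 := by rw [abs_pow, hYabs, one_pow]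
        have hE2 : |((-1:ℝ) ^ (W (N+1) ω)) ^ ((i+b)%2)| = 1 := by rw [abs_pow, hE1, one_pow]
        rw [abs_mul, abs_mul, hY2, hE2, one_mul, mul_one, abs_pow]
        exact pow_le_pow_left₀ (abs_nonneg _) (hSabs N ω) _
  
  have hr1 : Tendsto (fun N : ℕ => ((N:ℝ)-1)/((N:ℝ)+1)) atTop (𝓝 1) := by
    have h1 : Tendsto (fun N : ℕ => (N:ℝ) + 1) atTop atTop :=
      tendsto_atTop_add_const_right _ 1 tendsto_natCast_atTop_atTop
    have h2 : Tendsto (fun N : ℕ => 2/((N:ℝ)+1)) atTop (𝓝 0) :=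
      Tendsto.div_atTop tendsto_const_nhds h1
    have h3 := (tendsto_const_nhds (x := (1:ℝ))).sub h2
    rw [sub_zero] at h3
    apply h3.congr
    intro N
    have hne : ((N:ℝ)+1) ≠ 0 := by positivity
    field_simp
    ring
  have hrabs : ∀ (e N : ℕ), 1 ≤ N → |if Even e then (1:ℝ) else ((N:ℝ)-1)/((N:ℝ)+1)| ≤ 1 := by
    intro e N hN
    by_cases he : Even e
    · simp [he]
    · rw [if_neg he, abs_div]
      have h1 : (1:ℝ) ≤ (N:ℝ) := by exact_mod_cast hN
      rw [abs_of_nonneg (by linarith : (0:ℝ) ≤ (N:ℝ)-1),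
        abs_of_nonneg (by linarith : (0:ℝ) ≤ (N:ℝ)+1)]
      rw [div_le_one (by linarith)]
      linarith
  have htail : ∀ (A j b e : ℕ), 2 ≤ j → j ≤ A →
      Tendsto (fun N : ℕ => ((A.choose j : ℕ) : ℝ) *
        ((if Even e then (1:ℝ) else ((N:ℝ)-1)/((N:ℝ)+1)) * M b (A-j) N) * (N:ℝ) / (N:ℝ)^A)
        atTop (𝓝 0) := by
    intro A j b e hj2 hjA
    apply squeeze_zero_norm' (a := fun N : ℕ => ((A.choose j : ℕ) : ℝ) / (N:ℝ))
    · filter_upwards [eventually_ge_atTop 1] with N hN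
      have h1 : (1:ℝ) ≤ (N:ℝ) := by exact_mod_cast hN
      have hNpos : (0:ℝ) < (N:ℝ) := by linarith
      have hnum : |((A.choose j : ℕ) : ℝ) *
          ((if Even e then (1:ℝ) else ((N:ℝ)-1)/((N:ℝ)+1)) * M b (A-j) N) * (N:ℝ)|
          ≤ ((A.choose j : ℕ) : ℝ) * (N:ℝ)^(A-1) := by
        rw [abs_mul, abs_mul, Nat.abs_cast, abs_of_nonneg hNpos.le]
        have h2 : |(if Even e then (1:ℝ) else ((N:ℝ)-1)/((N:ℝ)+1)) * M b (A-j) N|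
            ≤ (N:ℝ)^(A-j) := by
          rw [abs_mul]
          calc |if Even e then (1:ℝ) else ((N:ℝ)-1)/((N:ℝ)+1)| * |M b (A-j) N|
              ≤ 1 * (N:ℝ)^(A-j) :=
                mul_le_mul (hrabs e N hN) (hMbound b (A-j) N) (abs_nonneg _) zero_le_one
            _ = (N:ℝ)^(A-j) := one_mul _
        calc ((A.choose j : ℕ) : ℝ) *
              |(if Even e then (1:ℝ) else ((N:ℝ)-1)/((N:ℝ)+1)) * M b (A-j) N| * (N:ℝ)
            ≤ ((A.choose j : ℕ) : ℝ) * (N:ℝ)^(A-j) * (N:ℝ) := by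
              apply mul_le_mul_of_nonneg_right _ hNpos.le
              exact mul_le_mul_of_nonneg_left h2 (Nat.cast_nonneg _)
          _ = ((A.choose j : ℕ) : ℝ) * (N:ℝ)^(A-j+1) := by rw [mul_assoc, pow_succ]
          _ ≤ ((A.choose j : ℕ) : ℝ) * (N:ℝ)^(A-1) := by
              apply mul_le_mul_of_nonneg_left _ (Nat.cast_nonneg _)
              exact pow_le_pow_right₀ h1 (by omega)
      rw [Real.norm_eq_abs, abs_div, abs_of_nonneg (by positivity : (0:ℝ) ≤ (N:ℝ)^A)]
      have hNA1 : ((N:ℝ))^(A-1) ≠ 0 := by positivity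
      have hAeq : (N:ℝ)^A = (N:ℝ)^(A-1) * (N:ℝ) := by
        rw [← pow_succ]
        congr 1
        omega
      calc |((A.choose j : ℕ) : ℝ) *
            ((if Even e then (1:ℝ) else ((N:ℝ)-1)/((N:ℝ)+1)) * M b (A-j) N) * (N:ℝ)| / (N:ℝ)^A
          ≤ (((A.choose j : ℕ) : ℝ) * (N:ℝ)^(A-1)) / (N:ℝ)^A := by gcongr
        _ = ((A.choose j : ℕ) : ℝ) / (N:ℝ) := by
            rw [hAeq]
            field_simp
    · exact Tendsto.div_atTop tendsto_const_nhds tendsto_natCast_atTop_atTop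
  have main : ∀ a : ℕ,
      Tendsto (fun N : ℕ => M 0 a N / (N:ℝ)^a) atTop (𝓝 (ctmA a)) ∧
      Tendsto (fun N : ℕ => M 1 a N / (N:ℝ)^a) atTop (𝓝 (ctmB a)) := by
    intro a
    induction a with
    | zero =>
      constructor
      · have h0 : ∀ N : ℕ, M 0 0 N = 1 := by
          intro N
          simp [hM]
        have heq : (fun N : ℕ => M 0 0 N / (N:ℝ)^0) = fun _ => (1:ℝ) := by
          funext N
          rw [h0]
          simp
        rw [heq, show ctmA 0 = 1 by simp [ctmA]]
        exact tendsto_const_nhds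
      · have hrec0 : ∀ N : ℕ, 1 ≤ N →
            M 1 0 (N+1) = (((N:ℝ)-1)/((N:ℝ)+1)) * M 1 0 N := by
          intro N hN
          have h := hrecD 0 1 N hN
          simpa using h
        have hg : Tendsto (fun N : ℕ =>
            (N:ℝ) * (M 1 0 (N+1) - (((N:ℝ)-1)/((N:ℝ)+1)) * M 1 0 N) / (N:ℝ)^0) atTop
            (𝓝 (0:ℝ)) := by
          apply Tendsto.congr' _ (tendsto_const_nhds (x := (0:ℝ)))
          filter_upwards [eventually_ge_atTop 1] with N hN
          rw [hrec0 N hN]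
          ring
        have hv := ctm_v_machine (v := fun N => M 1 0 N)
          (g := fun N => M 1 0 (N+1) - (((N:ℝ)-1)/((N:ℝ)+1)) * M 1 0 N) (a := 0)
          (fun N _ => by ring) hg
        have : (0:ℝ) / ((0:ℕ) + 2 : ℝ) = ctmB 0 := by simp [ctmB]
        rw [this] at hv
        exact hv
    | succ a ihp =>
      obtain ⟨ihP, ihQ⟩ := ihp
      constructor
      · -- P(a+1)
        have hterm : ∀ i ∈ Finset.range (a+1), Tendsto (fun N : ℕ =>
            (((a+1).choose (i+1) : ℕ) : ℝ) *
              ((if Even (i+1) then (1:ℝ) else ((N:ℝ)-1)/((N:ℝ)+1)) *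
                M ((i+1) % 2) (a+1-(i+1)) N) * (N:ℝ) / (N:ℝ)^(a+1))
            atTop (𝓝 (if i = 0 then ((a:ℝ)+1) * ctmB a else 0)) := by
          intro i hi
          have hia : i < a + 1 := Finset.mem_range.mp hi
          rcases Nat.eq_zero_or_pos i with rfl | hipos
          · rw [if_pos rfl]
            have h2 := (hr1.mul ihQ).const_mul ((a:ℝ)+1)
            rw [one_mul] at h2
            apply h2.congr'
            filter_upwards [eventually_ge_atTop 1] with N hN
            have hNpos : (0:ℝ) < (N:ℝ) := by exact_mod_cast hN
            have hN0 : (N:ℝ) ≠ 0 := ne_of_gt hNpos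
            simp only [Nat.zero_add, Nat.choose_one_right, Nat.add_sub_cancel]
            rw [if_neg (by decide : ¬ Even 1)]
            rw [show (1 : ℕ) % 2 = 1 from rfl]
            push_cast
            rw [pow_succ]
            field_simp
          · rw [if_neg (by omega)]
            exact htail (a+1) (i+1) ((i+1) % 2) (i+1) (by omega) (by omega)
        have hsum := tendsto_finset_sum (Finset.range (a+1)) hterm
        have hval : (∑ i ∈ Finset.range (a+1),
            (if i = 0 then ((a:ℝ)+1) * ctmB a else 0)) = ((a:ℝ)+1) * ctmB a := by
          rw [Finset.sum_eq_single_of_mem 0 (Finset.mem_range.mpr (by omega))]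
          · rw [if_pos rfl]
          · intro b hb hb0
            rw [if_neg hb0]
        rw [hval] at hsum
        have hd : Tendsto (fun N : ℕ =>
            (M 0 (a+1) (N+1) - M 0 (a+1) N) * (N:ℝ) / (N:ℝ)^(a+1)) atTop
            (𝓝 (((a:ℝ)+1) * ctmB a)) := by
          apply hsum.congr'
          filter_upwards [eventually_ge_atTop 1] with N hN
          have hD := hrecD (a+1) 0 N hN
          rw [Finset.sum_range_succ'] at hD
          simp only [Nat.add_zero] at hD
          rw [Nat.choose_zero_right] at hD
          norm_num at hD
          rw [hD]
          rw [add_sub_cancel_right, Finset.sum_mul, Finset.sum_div]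
          apply Finset.sum_congr rfl
          intro c hc
          split_ifs <;> ring
        have hu := ctm_u_machine (u := fun N => M 0 (a+1) N) (a := a+1) (by omega) hd
        have hfin : (((a:ℝ)+1) * ctmB a) / ((a+1 : ℕ) : ℝ) = ctmA (a+1) := by
          rw [← ctmB_eq (show 1 ≤ a+1 by omega)]
          simp only [Nat.add_sub_cancel]
          push_cast
          have : ((a:ℝ)+1) ≠ 0 := by positivity
          field_simp
        rw [hfin] at hu
        exact hu
      · -- Q(a+1)
        have hterm : ∀ i ∈ Finset.range (a+1), Tendsto (fun N : ℕ =>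
            (((a+1).choose (i+1) : ℕ) : ℝ) *
              ((if Even (i+1+1) then (1:ℝ) else ((N:ℝ)-1)/((N:ℝ)+1)) *
                M ((i+1+1) % 2) (a+1-(i+1)) N) * (N:ℝ) / (N:ℝ)^(a+1))
            atTop (𝓝 (if i = 0 then ((a:ℝ)+1) * ctmA a else 0)) := by
          intro i hi
          have hia : i < a + 1 := Finset.mem_range.mp hi
          rcases Nat.eq_zero_or_pos i with rfl | hipos
          · rw [if_pos rfl]
            have h2 := ihP.const_mul ((a:ℝ)+1)
            apply h2.congr'
            filter_upwards [eventually_ge_atTop 1] with N hN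
            have hNpos : (0:ℝ) < (N:ℝ) := by exact_mod_cast hN
            have hN0 : (N:ℝ) ≠ 0 := ne_of_gt hNpos
            simp only [Nat.zero_add, Nat.choose_one_right, Nat.add_sub_cancel]
            rw [if_pos (by decide : Even 2)]
            rw [show (2 : ℕ) % 2 = 0 from rfl]
            push_cast
            rw [pow_succ]
            field_simp
          · rw [if_neg (by omega)]
            exact htail (a+1) (i+1) ((i+1+1) % 2) (i+1+1) (by omega) (by omega)
        have hsum := tendsto_finset_sum (Finset.range (a+1)) hterm
        have hval : (∑ i ∈ Finset.range (a+1),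
            (if i = 0 then ((a:ℝ)+1) * ctmA a else 0)) = ((a:ℝ)+1) * ctmA a := by
          rw [Finset.sum_eq_single_of_mem 0 (Finset.mem_range.mpr (by omega))]
          · rw [if_pos rfl]
          · intro b hb hb0
            rw [if_neg hb0]
        rw [hval] at hsum
        have hg : Tendsto (fun N : ℕ =>
            (N:ℝ) * (M 1 (a+1) (N+1) - (((N:ℝ)-1)/((N:ℝ)+1)) * M 1 (a+1) N) / (N:ℝ)^(a+1))
            atTop (𝓝 (((a:ℝ)+1) * ctmA a)) := by
          apply hsum.congr'
          filter_upwards [eventually_ge_atTop 1] with N hN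
          have hD := hrecD (a+1) 1 N hN
          rw [Finset.sum_range_succ'] at hD
          rw [Nat.choose_zero_right] at hD
          norm_num at hD
          rw [hD, add_sub_cancel_right, mul_comm ((N:ℝ)), Finset.sum_mul, Finset.sum_div]
          apply Finset.sum_congr rfl
          intro c hc
          split_ifs <;> ring
        have hv := ctm_v_machine (v := fun N => M 1 (a+1) N)
          (g := fun N => M 1 (a+1) (N+1) - (((N:ℝ)-1)/((N:ℝ)+1)) * M 1 (a+1) N) (a := a+1)
          (fun N _ => by ring) hg
        have hfin : (((a:ℝ)+1) * ctmA a) / (((a+1:ℕ):ℝ) + 2) = ctmB (a+1) := by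
          simp only [ctmB, Nat.add_sub_cancel]
          push_cast
          ring
        rw [hfin] at hv
        exact hv
  obtain ⟨hP, -⟩ := main K
  have hcg : (fun N : ℕ => ∫ ω, (S N ω / (N:ℝ)) ^ K ∂μ)
      = fun N : ℕ => M 0 K N / (N:ℝ)^K := by
    funext N
    simp only [hM, pow_zero, mul_one, div_pow]
    rw [integral_div]
  rw [hcg]
  have hval : (if Even K then (1:ℝ) / ((K:ℝ) + 1) else 0) = ctmA K := by
    simp [ctmA]
  rw [hval]
  exact hP
end

section
/- Let p_n = 1/n for n ≥ 2 and p_1 = 1/2, W_n independent Bernoulli(p_n), Y_n = (-1)^{W_1+...+W_n}, and S_N = Y_1 + ... + Y_N. Then S_N/N converges in distribution to the uniform distribution on [-1, 1] as N → ∞. -/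
open MeasureTheory ProbabilityTheory Finset Filter

noncomputable def qcoin (N : ℕ) (k : ℤ) : ℝ :=
  if k = 0 then 1 / (2 * (N : ℝ))
  else if 1 ≤ k ∧ k ≤ (N : ℤ) - 1 then
    (2 * ((N : ℝ) - (k : ℝ)) - 1) / (2 * N * (N - 1))
  else 0

lemma qcoin_nonneg (N : ℕ) (k : ℤ) : 0 ≤ qcoin N k := by
  unfold qcoin
  split_ifs with h1 h2
  · positivity
  · have hN : 2 ≤ N := by omega
    have hk : (k : ℝ) ≤ (N : ℝ) - 1 := by
      have := h2.2; push_cast; exact_mod_cast by exact_mod_cast this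
    apply div_nonneg
    · nlinarith [h2.1, h2.2]
    · have : (2:ℝ) ≤ (N:ℝ) := by exact_mod_cast hN
      nlinarith
  · exact le_refl 0

lemma qrec (N : ℕ) (hN : 1 ≤ N) (k : ℤ) :
    qcoin (N + 1) k
      = qcoin N k * (1 - 1 / (N + 1 : ℝ)) + qcoin N ((N : ℤ) - k) * (1 / (N + 1 : ℝ)) := by
  have hN0 : (N : ℝ) ≠ 0 := by
    have : (1:ℝ) ≤ (N:ℝ) := by exact_mod_cast hN
    linarith
  have hN1 : (N : ℝ) + 1 ≠ 0 := by positivity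
  rcases lt_trichotomy k 0 with hk | hk | hk
  · -- k < 0 : everything is 0
    have e1 : qcoin (N+1) k = 0 := by
      unfold qcoin; rw [if_neg (by omega), if_neg (by push_cast; omega)]
    have e2 : qcoin N k = 0 := by
      unfold qcoin; rw [if_neg (by omega), if_neg (by omega)]
    have e3 : qcoin N ((N:ℤ) - k) = 0 := by
      unfold qcoin; rw [if_neg (by omega), if_neg (by omega)]
    rw [e1, e2, e3]; ring
  · -- k = 0
    subst hk
    have e1 : qcoin (N+1) 0 = 1 / (2 * ((N:ℝ)+1)) := by
      unfold qcoin; rw [if_pos rfl]; push_cast; ring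
    have e2 : qcoin N 0 = 1 / (2 * (N:ℝ)) := by unfold qcoin; rw [if_pos rfl]
    have e3 : qcoin N ((N:ℤ) - 0) = 0 := by
      unfold qcoin; rw [if_neg (by omega), if_neg (by omega)]
    rw [e1, e2, e3]; field_simp; ring
  · rcases lt_trichotomy k (N:ℤ) with hk2 | hk2 | hk2
    · -- 1 ≤ k ≤ N - 1, implies N ≥ 2
      have hN2 : 2 ≤ N := by omega
      have hkN : (k:ℝ) ≤ (N:ℝ) - 1 := by exact_mod_cast (by omega : k ≤ (N:ℤ) - 1)
      have hk1 : (1:ℝ) ≤ (k:ℝ) := by exact_mod_cast hk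
      have hNm1 : (N:ℝ) - 1 ≠ 0 := by
        have : (2:ℝ) ≤ (N:ℝ) := by exact_mod_cast hN2
        linarith
      have e1 : qcoin (N+1) k
          = (2 * (((N:ℝ)+1) - (k:ℝ)) - 1) / (2 * ((N:ℝ)+1) * (N:ℝ)) := by
        unfold qcoin; rw [if_neg (by omega), if_pos (by push_cast; omega)]
        push_cast; ring_nf
      have e2 : qcoin N k = (2 * ((N:ℝ) - (k:ℝ)) - 1) / (2 * (N:ℝ) * ((N:ℝ)-1)) := by
        unfold qcoin; rw [if_neg (by omega), if_pos (by omega)]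
      have e3 : qcoin N ((N:ℤ) - k) = (2 * (k:ℝ) - 1) / (2 * (N:ℝ) * ((N:ℝ)-1)) := by
        unfold qcoin; rw [if_neg (by omega), if_pos (by omega)]
        push_cast; ring_nf
      rw [e1, e2, e3]; field_simp; ring
    · -- k = N
      subst hk2
      have e1 : qcoin (N+1) (N:ℤ)
          = (2 * (((N:ℝ)+1) - (N:ℝ)) - 1) / (2 * ((N:ℝ)+1) * (N:ℝ)) := by
        unfold qcoin; rw [if_neg (by omega), if_pos (by push_cast; omega)]
        push_cast; ring_nf
      have e2 : qcoin N (N:ℤ) = 0 := by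
        unfold qcoin; rw [if_neg (by omega), if_neg (by omega)]
      have e3 : qcoin N ((N:ℤ) - (N:ℤ)) = 1 / (2 * (N:ℝ)) := by
        unfold qcoin; rw [if_pos (by omega)]
      rw [e1, e2, e3]; field_simp; ring
    · -- k > N : everything 0
      have e1 : qcoin (N+1) k = 0 := by
        unfold qcoin; rw [if_neg (by omega), if_neg (by push_cast; omega)]
      have e2 : qcoin N k = 0 := by
        unfold qcoin; rw [if_neg (by omega), if_neg (by omega)]
      have e3 : qcoin N ((N:ℤ) - k) = 0 := by
        unfold qcoin; rw [if_neg (by omega), if_neg (by omega)]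
      rw [e1, e2, e3]; ring

lemma qsum (N : ℕ) (hN : 1 ≤ N) (k : ℕ) (hk : k ≤ N) :
    qcoin N k + qcoin N ((N : ℤ) - k)
      = if k = 0 ∨ k = N then 1 / (2 * (N : ℝ)) else 1 / N := by
  rcases eq_or_ne k 0 with h0 | h0
  · subst h0
    rw [if_pos (Or.inl rfl)]
    have e1 : qcoin N ((0:ℕ):ℤ) = 1 / (2 * (N:ℝ)) := by
      unfold qcoin; rw [if_pos (by omega)]
    have e2 : qcoin N ((N:ℤ) - ((0:ℕ):ℤ)) = 0 := by
      unfold qcoin; rw [if_neg (by omega), if_neg (by omega)]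
    rw [e1, e2]; ring
  rcases eq_or_ne k N with hN' | hN'
  · rw [if_pos (Or.inr hN'), hN']
    have e1 : qcoin N ((N:ℕ):ℤ) = 0 := by
      unfold qcoin; rw [if_neg (by omega), if_neg (by omega)]
    have e2 : qcoin N ((N:ℤ) - ((N:ℕ):ℤ)) = 1 / (2 * (N:ℝ)) := by
      unfold qcoin; rw [if_pos (by omega)]
    rw [e1, e2]; ring
  · rw [if_neg (by tauto)]
    have hN2 : 2 ≤ N := by omega
    have hNm1 : (N:ℝ) - 1 ≠ 0 := by
      have : (2:ℝ) ≤ (N:ℝ) := by exact_mod_cast hN2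
      linarith
    have hN0 : (N:ℝ) ≠ 0 := by positivity
    have e1 : qcoin N k = (2 * ((N:ℝ) - (k:ℝ)) - 1) / (2 * (N:ℝ) * ((N:ℝ)-1)) := by
      unfold qcoin; rw [if_neg (by omega), if_pos (by omega)]
      norm_cast
    have e2 : qcoin N ((N:ℤ) - k) = (2 * (k:ℝ) - 1) / (2 * (N:ℝ) * ((N:ℝ)-1)) := by
      unfold qcoin; rw [if_neg (by omega), if_pos (by omega)]
      push_cast; ring_nf
    rw [e1, e2]; field_simp; ring

lemma riemann_limit (f : BoundedContinuousFunction ℝ ℝ) :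
    Tendsto (fun N : ℕ => ∑ k ∈ range (N+1),
        (qcoin N k + qcoin N ((N:ℤ) - k)) * f (((N:ℝ) - 2*k)/N)) atTop
      (nhds (∫ x in Set.Icc (-1:ℝ) 1, f x / 2)) := by
  set I : ℝ := ∫ x in Set.Icc (-1:ℝ) 1, f x / 2 with hI
  rw [Metric.tendsto_atTop]
  intro ε hε
  obtain ⟨δ, hδ, hδ'⟩ := Metric.uniformContinuousOn_iff.mp
    ((isCompact_Icc (a := (-1:ℝ)) (b := 1)).uniformContinuousOn_of_continuous
      f.continuous.continuousOn) (ε/4) (by positivity)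
  obtain ⟨N₁, hN₁⟩ := exists_nat_gt (2/δ)
  obtain ⟨N₂, hN₂⟩ := exists_nat_gt (4*‖f‖/ε)
  refine ⟨max (max N₁ N₂) 1, fun N hN => ?_⟩
  have hN1 : 1 ≤ N := le_trans (le_max_right _ _) hN
  have hNpos : (0:ℝ) < N := by exact_mod_cast hN1
  have hN0 : (N:ℝ) ≠ 0 := ne_of_gt hNpos
  have hNδ : 2/(N:ℝ) < δ := by
    have h1 : 2/δ < (N:ℝ) := lt_of_lt_of_le hN₁
      (by exact_mod_cast le_trans (le_max_left _ _) (le_trans (le_max_left _ _) hN))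
    rw [div_lt_iff₀ hNpos]
    rw [div_lt_iff₀ hδ] at h1
    linarith
  have hNf : ‖f‖/(N:ℝ) < ε/4 := by
    have h1 : 4*‖f‖/ε < (N:ℝ) := lt_of_lt_of_le hN₂
      (by exact_mod_cast le_trans (le_max_right _ _) (le_trans (le_max_left _ _) hN))
    rw [div_lt_iff₀ hε] at h1
    rw [div_lt_iff₀ hNpos]
    linarith
  set b : ℕ → ℝ := fun k => ((N:ℝ) - 2*k)/N with hbdef
  -- basic facts about b
  have hb0 : b 0 = 1 := by simp [hbdef, hN0]
  have hbN : b N = -1 := by simp [hbdef]; field_simp; ring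
  have hdiff : ∀ k : ℕ, b k - b (k+1) = 2/N := by
    intro k; simp only [hbdef]; push_cast; field_simp; ring
  have hbmem : ∀ k : ℕ, k ≤ N → b k ∈ Set.Icc (-1:ℝ) 1 := by
    intro k hk
    have hkr : (k:ℝ) ≤ (N:ℝ) := by exact_mod_cast hk
    constructor
    · rw [le_div_iff₀ hNpos]; nlinarith [Nat.cast_nonneg (α := ℝ) k]
    · rw [div_le_iff₀ hNpos]; nlinarith [Nat.cast_nonneg (α := ℝ) k]
  -- rewrite the sum using qsum
  have hsum : ∑ k ∈ range (N+1), (qcoin N k + qcoin N ((N:ℤ) - k)) * f (((N:ℝ) - 2*k)/N)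
      = ∑ k ∈ range (N+1), (if k = 0 ∨ k = N then 1/(2*(N:ℝ)) else 1/N) * f (b k) := by
    refine Finset.sum_congr rfl fun k hk => ?_
    rw [qsum N hN1 k (by simpa using Nat.lt_succ_iff.mp (Finset.mem_range.mp hk))]
  set T : ℝ := ∑ k ∈ range (N+1), (if k = 0 ∨ k = N then 1/(2*(N:ℝ)) else 1/N) * f (b k)
    with hTdef
  set U : ℝ := ∑ k ∈ range N, (1/(N:ℝ)) * f (b k) with hUdef
  -- T = U + boundary correction
  have hTU : T = U + (f (b N) - f (b 0))/(2*N) := by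
    have hU' : U = ∑ k ∈ range (N+1), (if k = N then (0:ℝ) else 1/N) * f (b k) := by
      rw [Finset.sum_range_succ, if_pos rfl]
      simp only [zero_mul, add_zero]
      refine Finset.sum_congr rfl fun k hk => ?_
      rw [if_neg (by exact Nat.ne_of_lt (Finset.mem_range.mp hk))]
    have key : T - U = -(f (b 0))/(2*N) + (f (b N))/(2*N) := by
      rw [hU', hTdef, ← Finset.sum_sub_distrib]
      have : ∀ k ∈ range (N+1),
          ((if k = 0 ∨ k = N then 1/(2*(N:ℝ)) else 1/N) * f (b k)
            - (if k = N then (0:ℝ) else 1/N) * f (b k))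
          = (if k = 0 then -(f (b 0))/(2*N) else 0)
            + (if k = N then (f (b N))/(2*N) else 0) := by
        intro k hk
        rcases eq_or_ne k 0 with h0 | h0
        · subst h0
          rw [if_pos (Or.inl rfl), if_neg (by omega), if_pos rfl, if_neg (by omega)]
          field_simp
          try ring
        rcases eq_or_ne k N with h1 | h1
        · subst h1
          rw [if_pos (Or.inr rfl), if_pos rfl, if_neg h0, if_pos rfl]
          field_simp
          try ring
        · rw [if_neg (by tauto), if_neg h1, if_neg h0, if_neg h1]
          ring
      rw [Finset.sum_congr rfl this, Finset.sum_add_distrib,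
        Finset.sum_ite_eq' (range (N+1)) 0, Finset.sum_ite_eq' (range (N+1)) N,
        if_pos (Finset.mem_range.mpr (by omega)), if_pos (Finset.mem_range.mpr (by omega))]
    have hr : (f (b N) - f (b 0))/(2*(N:ℝ)) = -f (b 0)/(2*(N:ℝ)) + f (b N)/(2*(N:ℝ)) := by
      ring
    rw [hr]; linarith [key]
  -- I as a sum of interval integrals
  have hint : ∀ (a c : ℝ), IntervalIntegrable (fun x => f x / 2) volume a c :=
    fun a c => (f.continuous.div_const 2).intervalIntegrable a c
  have hIsum : I = ∑ k ∈ range N, ∫ x in b (k+1)..b k, f x / 2 := by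
    have h1 : ∑ k ∈ range N, ∫ x in b k..b (k+1), f x / 2 = ∫ x in (b 0)..(b N), f x / 2 :=
      intervalIntegral.sum_integral_adjacent_intervals (fun k _ => hint _ _)
    have h2 : (∫ x in (b 0)..(b N), f x / 2) = -I := by
      rw [hb0, hbN, hI, intervalIntegral.integral_symm,
        intervalIntegral.integral_of_le (by norm_num : (-1:ℝ) ≤ 1),
        MeasureTheory.integral_Icc_eq_integral_Ioc]
    calc I = -∫ x in (b 0)..(b N), f x / 2 := by rw [h2]; ring
    _ = -∑ k ∈ range N, ∫ x in b k..b (k+1), f x / 2 := by rw [h1]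
    _ = ∑ k ∈ range N, ∫ x in b (k+1)..b k, f x / 2 := by
        rw [← Finset.sum_neg_distrib]
        refine Finset.sum_congr rfl fun k _ => ?_
        rw [intervalIntegral.integral_symm, neg_neg]
  have horder : ∀ k : ℕ, b (k+1) ≤ b k := by
    intro k
    have := hdiff k
    have h2 : (0:ℝ) < 2/N := by positivity
    linarith
  have hterm : ∀ k ∈ range N, |1/(N:ℝ) * f (b k) - ∫ x in b (k+1)..b k, f x / 2|
      ≤ ε/(4*N) := by
    intro k hk
    have hkN : k + 1 ≤ N := Finset.mem_range.mp hk
    have hbk1 := hbmem (k+1) hkN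
    have hbk := hbmem k (by omega)
    have hconst : (1:ℝ)/N * f (b k) = ∫ x in b (k+1)..b k, f (b k) / 2 := by
      rw [intervalIntegral.integral_const, hdiff k, smul_eq_mul]
      ring
    rw [hconst, ← intervalIntegral.integral_sub (intervalIntegrable_const) (hint _ _)]
    have hbound : ∀ x ∈ Set.uIoc (b (k+1)) (b k), ‖f (b k)/2 - f x/2‖ ≤ ε/8 := by
      intro x hx
      rw [Set.uIoc_of_le (horder k)] at hx
      have hxmem : x ∈ Set.Icc (-1:ℝ) 1 :=
        ⟨le_trans hbk1.1 (le_of_lt hx.1), le_trans hx.2 hbk.2⟩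
      have hdist : dist (b k) x < δ := by
        rw [Real.dist_eq, abs_of_nonneg (by linarith [hx.2])]
        have := hdiff k
        have := hx.1
        linarith
      have := hδ' (b k) hbk x hxmem hdist
      rw [Real.dist_eq] at this
      have heq : f (b k)/2 - f x/2 = (f (b k) - f x)/2 := by ring
      rw [heq, Real.norm_eq_abs, abs_div]
      rw [abs_of_pos (by norm_num : (0:ℝ) < 2)]
      linarith
    calc |∫ x in b (k+1)..b k, (f (b k)/2 - f x/2)|
        ≤ (ε/8) * |b k - b (k+1)| :=
          intervalIntegral.norm_integral_le_of_norm_le_const hbound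
    _ = ε/(4*N) := by
        rw [hdiff k, abs_of_pos (by positivity : (0:ℝ) < 2/N)]
        field_simp; ring
  have hUI : |U - I| ≤ ε/4 := by
    rw [hUdef, hIsum, ← Finset.sum_sub_distrib]
    calc |∑ k ∈ range N, (1/(N:ℝ) * f (b k) - ∫ x in b (k+1)..b k, f x / 2)|
        ≤ ∑ k ∈ range N, |1/(N:ℝ) * f (b k) - ∫ x in b (k+1)..b k, f x / 2| :=
          Finset.abs_sum_le_sum_abs _ _
    _ ≤ ∑ _k ∈ range N, ε/(4*N) := Finset.sum_le_sum hterm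
    _ = ε/4 := by
        rw [Finset.sum_const, Finset.card_range, nsmul_eq_mul]
        field_simp
  have hTUb : |T - U| ≤ ‖f‖/N := by
    have heq : T - U = (f (b N) - f (b 0))/(2*(N:ℝ)) := by rw [hTU]; ring
    have h2 : |f (b N) - f (b 0)| ≤ 2*‖f‖ := by
      have h3 := f.norm_coe_le_norm (b N)
      have h4 := f.norm_coe_le_norm (b 0)
      rw [Real.norm_eq_abs] at h3 h4
      calc |f (b N) - f (b 0)| ≤ |f (b N)| + |f (b 0)| := abs_sub _ _
      _ ≤ 2*‖f‖ := by linarith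
    rw [heq, abs_div, abs_of_pos (by positivity : (0:ℝ) < 2*(N:ℝ)),
      div_le_div_iff₀ (by positivity) hNpos]
    nlinarith [h2]
  rw [hsum, Real.dist_eq]
  calc |T - I| ≤ |T - U| + |U - I| := abs_sub_le _ _ _
  _ ≤ ‖f‖/N + ε/4 := add_le_add hTUb hUI
  _ < ε := by linarith
set_option maxHeartbeats 1000000 in
theorem coin_turning_uniform_limit
    {Ω : Type*} [MeasurableSpace Ω] (μ : Measure Ω) [IsProbabilityMeasure μ]
    (p : ℕ → ℝ) (hp1 : p 1 = 1 / 2) (hpn : ∀ n, 2 ≤ n → p n = 1 / n)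
    (W : ℕ → Ω → ℕ) (hWmeas : ∀ k, Measurable (W k))
    (hWrange : ∀ k ω, W k ω = 0 ∨ W k ω = 1)
    (hWindep : iIndepFun W μ)
    (hWp : ∀ k, μ {ω | W k ω = 1} = ENNReal.ofReal (p k))
    (Y : ℕ → Ω → ℝ)
    (hY : ∀ n ω, Y n ω = (-1 : ℝ) ^ (∑ k ∈ Finset.Icc 1 n, W k ω))
    (S : ℕ → Ω → ℝ) (hS : ∀ N ω, S N ω = ∑ n ∈ Finset.Icc 1 N, Y n ω) :
    ∀ f : BoundedContinuousFunction ℝ ℝ,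
      Tendsto (fun N : ℕ => ∫ ω, f (S N ω / N) ∂μ) atTop
        (nhds (∫ x in Set.Icc (-1 : ℝ) 1, f x / 2)) := by
  intro f
  -- measurability
  have hYmeas : ∀ n, Measurable (Y n) := by
    intro n
    have he : Y n = (fun m : ℕ => (-1:ℝ)^m) ∘ (fun ω => ∑ k ∈ Finset.Icc 1 n, W k ω) := by
      funext ω; simp [hY, Function.comp]
    rw [he]
    exact measurable_from_top.comp (Finset.measurable_sum _ fun k _ => hWmeas k)
  have hSmeas : ∀ N, Measurable (S N) := by
    intro N
    have he : S N = fun ω => ∑ n ∈ Finset.Icc 1 N, Y n ω := by funext ω; rw [hS]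
    rw [he]
    exact Finset.measurable_sum _ fun n _ => hYmeas n
  -- range of Y
  have hYrange : ∀ n ω, Y n ω = 1 ∨ Y n ω = -1 := by
    intro n ω
    rw [hY]
    rcases Nat.even_or_odd (∑ k ∈ Finset.Icc 1 n, W k ω) with h | h
    · exact Or.inl h.neg_one_pow
    · exact Or.inr h.neg_one_pow
  -- recursions
  have hYstep : ∀ n ω, Y (n+1) ω = Y n ω * (-1:ℝ)^(W (n+1) ω) := by
    intro n ω
    rw [hY, hY, Finset.sum_Icc_succ_top (by omega : 1 ≤ n + 1), pow_add]
  have hSstep : ∀ n ω, S (n+1) ω = S n ω + Y (n+1) ω := by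
    intro n ω
    rw [hS, hS, Finset.sum_Icc_succ_top (by omega : 1 ≤ n + 1)]
  -- measurable sets
  have hAmeas : ∀ (N : ℕ) (c y : ℝ), MeasurableSet {ω | S N ω = c ∧ Y N ω = y} := by
    intro N c y
    have he : {ω | S N ω = c ∧ Y N ω = y} = S N ⁻¹' {c} ∩ Y N ⁻¹' {y} := by
      ext ω; simp [Set.mem_preimage]
    rw [he]
    exact (hSmeas N (measurableSet_singleton c)).inter (hYmeas N (measurableSet_singleton y))
  have hWm1 : ∀ k (i : ℕ), MeasurableSet {ω | W k ω = i} := by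
    intro k i
    have he : {ω | W k ω = i} = W k ⁻¹' {i} := by ext ω; simp
    rw [he]; exact hWmeas k (measurableSet_singleton i)
  -- measure of W-events
  have hμW0 : ∀ n, 0 ≤ p n → μ {ω | W n ω = 0} = ENNReal.ofReal (1 - p n) := by
    intro n hpnn
    have he : {ω | W n ω = 0} = {ω | W n ω = 1}ᶜ := by
      ext ω
      simp only [Set.mem_compl_iff, Set.mem_setOf_eq]
      rcases hWrange n ω with h | h <;> simp [h]
    rw [he, measure_compl (hWm1 n 1) (measure_ne_top μ _), measure_univ, hWp,
      ← ENNReal.ofReal_one, ← ENNReal.ofReal_sub _ hpnn]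
  -- independence of (S N, Y N) from W (N+1)
  have hindep : ∀ N : ℕ, IndepFun (fun ω => (S N ω, Y N ω)) (W (N+1)) μ := by
    intro N
    have hdisj : Disjoint (Finset.Icc 1 N) ({N+1} : Finset ℕ) := by
      rw [Finset.disjoint_singleton_right, Finset.mem_Icc]
      omega
    have base := hWindep.indepFun_finset (Finset.Icc 1 N) {N+1} hdisj hWmeas
    have hmeasdite : ∀ k : ℕ,
        Measurable (fun v : ((Finset.Icc 1 N : Finset ℕ) → ℕ) =>
          if h : k ∈ Finset.Icc 1 N then v ⟨k, h⟩ else 0) := by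
      intro k
      by_cases h : k ∈ Finset.Icc 1 N
      · simp only [dif_pos h]; exact measurable_pi_apply _
      · simp only [dif_neg h]; exact measurable_const
    set Φ : ((Finset.Icc 1 N : Finset ℕ) → ℕ) → ℝ × ℝ := fun v =>
      (∑ n ∈ Finset.Icc 1 N,
        (-1:ℝ)^(∑ k ∈ Finset.Icc 1 n, (if h : k ∈ Finset.Icc 1 N then v ⟨k, h⟩ else 0)),
       (-1:ℝ)^(∑ k ∈ Finset.Icc 1 N, (if h : k ∈ Finset.Icc 1 N then v ⟨k, h⟩ else 0)))
      with hΦ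
    have hΦmeas : Measurable Φ := by
      rw [hΦ]
      refine Measurable.prod ?_ ?_
      · show Measurable fun v : ((Finset.Icc 1 N : Finset ℕ) → ℕ) =>
          ∑ n ∈ Finset.Icc 1 N,
            (-1:ℝ)^(∑ k ∈ Finset.Icc 1 n, (if h : k ∈ Finset.Icc 1 N then v ⟨k, h⟩ else 0))
        exact Finset.measurable_sum _ fun n _ =>
          measurable_from_top.comp (Finset.measurable_sum _ fun k _ => hmeasdite k)
      · show Measurable fun v : ((Finset.Icc 1 N : Finset ℕ) → ℕ) =>
          (-1:ℝ)^(∑ k ∈ Finset.Icc 1 N, (if h : k ∈ Finset.Icc 1 N then v ⟨k, h⟩ else 0))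
        exact measurable_from_top.comp (Finset.measurable_sum _ fun k _ => hmeasdite k)
    have hcomp := base.comp hΦmeas
      (measurable_pi_apply (⟨N+1, Finset.mem_singleton_self _⟩ : (({N+1} : Finset ℕ) : Finset ℕ)))
    have h1 : (Φ ∘ fun ω (i : (Finset.Icc 1 N : Finset ℕ)) => W i ω)
        = fun ω => (S N ω, Y N ω) := by
      funext ω
      simp only [Function.comp_apply, hΦ]
      have hinner : ∀ n ∈ Finset.Icc 1 N,
          (∑ k ∈ Finset.Icc 1 n,
            (if h : k ∈ Finset.Icc 1 N then W (k : ℕ) ω else 0)) = ∑ k ∈ Finset.Icc 1 n, W k ω := by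
        intro n hn
        refine Finset.sum_congr rfl fun k hk => ?_
        have hkN : k ∈ Finset.Icc 1 N := by
          rw [Finset.mem_Icc] at *
          omega
        rw [dif_pos hkN]
      have hN2 : (∑ k ∈ Finset.Icc 1 N,
          (if h : k ∈ Finset.Icc 1 N then W (k : ℕ) ω else 0)) = ∑ k ∈ Finset.Icc 1 N, W k ω := by
        refine Finset.sum_congr rfl fun k hk => ?_
        rw [dif_pos hk]
      refine Prod.ext ?_ ?_
      · show (∑ n ∈ Finset.Icc 1 N, (-1:ℝ)^(∑ k ∈ Finset.Icc 1 n,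
          (if h : k ∈ Finset.Icc 1 N then W (k : ℕ) ω else 0))) = S N ω
        rw [hS]
        refine Finset.sum_congr rfl fun n hn => ?_
        rw [hY, hinner n hn]
      · show ((-1:ℝ)^(∑ k ∈ Finset.Icc 1 N,
          (if h : k ∈ Finset.Icc 1 N then W (k : ℕ) ω else 0))) = Y N ω
        rw [hY, hN2]
    have h2 : ((fun v : (({N+1} : Finset ℕ) : Finset ℕ) → ℕ =>
        v ⟨N+1, Finset.mem_singleton_self _⟩) ∘ fun ω (i : (({N+1} : Finset ℕ) : Finset ℕ)) => W i ω)
        = W (N+1) := rfl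
    rw [h1, h2] at hcomp
    exact hcomp
  have hinter : ∀ (N : ℕ) (c y : ℝ) (i : ℕ),
      μ ({ω | S N ω = c ∧ Y N ω = y} ∩ {ω | W (N+1) ω = i})
        = μ {ω | S N ω = c ∧ Y N ω = y} * μ {ω | W (N+1) ω = i} := by
    intro N c y i
    refine (hindep N).meas_inter ?_ ?_
    · exact ⟨{(c, y)}, measurableSet_singleton _, by ext ω; simp [Prod.ext_iff]⟩
    · exact ⟨{i}, measurableSet_singleton _, by ext ω; simp⟩
  have key : ∀ N : ℕ, 1 ≤ N → ∀ k : ℤ,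
      μ {ω | S N ω = (N:ℝ) - 2*(k:ℝ) ∧ Y N ω = 1} = ENNReal.ofReal (qcoin N k) ∧
      μ {ω | S N ω = (N:ℝ) - 2*(k:ℝ) ∧ Y N ω = -1}
        = ENNReal.ofReal (qcoin N ((N:ℤ) - k)) := by
    intro N hN
    induction N, hN using Nat.le_induction with
    | base =>
      intro k
      have hS1 : ∀ ω, S 1 ω = Y 1 ω := by
        intro ω; rw [hS]; simp
      have hY1 : ∀ ω, Y 1 ω = (-1:ℝ)^(W 1 ω) := by
        intro ω; rw [hY]; simp
      constructor
      · rcases eq_or_ne k 0 with rfl | hk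
        · have he : {ω | S 1 ω = ((1:ℕ):ℝ) - 2*((0:ℤ):ℝ) ∧ Y 1 ω = 1} = {ω | W 1 ω = 0} := by
            ext ω
            simp only [Set.mem_setOf_eq, Nat.cast_one, Int.cast_zero, mul_zero, sub_zero]
            constructor
            · rintro ⟨-, hy⟩
              rcases hWrange 1 ω with h | h
              · exact h
              · rw [hY1, h] at hy; norm_num at hy
            · intro h
              rw [hS1, hY1, h]
              norm_num
          rw [he, hμW0 1 (by rw [hp1]; norm_num), hp1]
          unfold qcoin
          norm_num
        · have he : {ω | S 1 ω = ((1:ℕ):ℝ) - 2*((k:ℤ):ℝ) ∧ Y 1 ω = 1} = (∅ : Set Ω) := by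
            ext ω
            simp only [Set.mem_setOf_eq, Set.mem_empty_iff_false, iff_false, not_and]
            intro hs hy
            rw [hS1, hy] at hs
            have : (k:ℝ) = 0 := by push_cast at hs ⊢; linarith
            exact hk (by exact_mod_cast this)
          have hq : qcoin 1 k = 0 := by
            unfold qcoin; rw [if_neg hk, if_neg (by omega)]
          rw [he, hq, measure_empty, ENNReal.ofReal_zero]
      · rcases eq_or_ne k 1 with rfl | hk
        · have he : {ω | S 1 ω = ((1:ℕ):ℝ) - 2*((1:ℤ):ℝ) ∧ Y 1 ω = -1} = {ω | W 1 ω = 1} := by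
            ext ω
            simp only [Set.mem_setOf_eq, Nat.cast_one, Int.cast_one]
            constructor
            · rintro ⟨-, hy⟩
              rcases hWrange 1 ω with h | h
              · rw [hY1, h] at hy; norm_num at hy
              · exact h
            · intro h
              rw [hS1, hY1, h]
              norm_num
          rw [he, hWp, hp1]
          have hq : qcoin 1 (((1:ℕ):ℤ) - 1) = 1/2 := by
            unfold qcoin; rw [if_pos (by omega)]; norm_num
          rw [hq]
        · have he : {ω | S 1 ω = ((1:ℕ):ℝ) - 2*((k:ℤ):ℝ) ∧ Y 1 ω = -1} = (∅ : Set Ω) := by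
            ext ω
            simp only [Set.mem_setOf_eq, Set.mem_empty_iff_false, iff_false, not_and]
            intro hs hy
            rw [hS1, hy] at hs
            have : (k:ℝ) = 1 := by push_cast at hs ⊢; linarith
            exact hk (by exact_mod_cast this)
          have hq : qcoin 1 (((1:ℕ):ℤ) - k) = 0 := by
            unfold qcoin; rw [if_neg (by omega), if_neg (by omega)]
          rw [he, hq, measure_empty, ENNReal.ofReal_zero]
    | succ n hn ih =>
      intro k
      have hpval : p (n+1) = 1/((n:ℝ)+1) := by
        rw [hpn (n+1) (by omega)]
        push_cast
        ring
      have hμ0 : μ {ω | W (n+1) ω = 0} = ENNReal.ofReal (1 - 1/((n:ℝ)+1)) := by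
        rw [hμW0 (n+1) (by rw [hpval]; positivity), hpval]
      have hμ1 : μ {ω | W (n+1) ω = 1} = ENNReal.ofReal (1/((n:ℝ)+1)) := by
        rw [hWp, hpval]
      have hp0 : (0:ℝ) ≤ 1 - 1/((n:ℝ)+1) := by
        have h1 : (1:ℝ) ≤ (n:ℝ) + 1 := by
          have := Nat.cast_nonneg (α := ℝ) n
          linarith
        have h2 : 1/((n:ℝ)+1) ≤ 1 := by
          rw [div_le_one (by positivity)]; exact h1
        linarith
      have hp1' : (0:ℝ) ≤ 1/((n:ℝ)+1) := by positivity
      have hdisj01 : ∀ (A B : Set Ω),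
          Disjoint (A ∩ {ω | W (n+1) ω = 0}) (B ∩ {ω | W (n+1) ω = 1}) := by
        intro A B
        rw [Set.disjoint_left]
        rintro ω ⟨-, h0⟩ ⟨-, h1⟩
        simp only [Set.mem_setOf_eq] at h0 h1
        omega
      constructor
      · -- Y (n+1) = 1 case
        have hset : {ω | S (n+1) ω = ((n+1:ℕ):ℝ) - 2*(k:ℝ) ∧ Y (n+1) ω = 1}
            = ({ω | S n ω = (n:ℝ) - 2*(k:ℝ) ∧ Y n ω = 1} ∩ {ω | W (n+1) ω = 0})
              ∪ ({ω | S n ω = (n:ℝ) - 2*(k:ℝ) ∧ Y n ω = -1} ∩ {ω | W (n+1) ω = 1}) := by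
          ext ω
          have hSs := hSstep n ω
          have hYs := hYstep n ω
          simp only [Set.mem_setOf_eq, Set.mem_union, Set.mem_inter_iff]
          rcases hWrange (n+1) ω with h | h
          · rw [h] at hYs
            simp only [pow_zero, mul_one] at hYs
            constructor
            · rintro ⟨hs, hy⟩
              rw [hYs] at hy
              have hs' : S n ω = (n:ℝ) - 2*(k:ℝ) := by
                rw [hSs, hYs, hy] at hs
                push_cast at hs ⊢
                linarith
              exact Or.inl ⟨⟨hs', hy⟩, h⟩
            · rintro (⟨⟨hs, hy⟩, -⟩ | ⟨⟨-, -⟩, h1⟩)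
              · rw [hSs, hYs, hy]
                refine ⟨?_, rfl⟩
                push_cast
                push_cast at hs
                linarith
              · omega
          · rw [h] at hYs
            simp only [pow_one, mul_neg_one] at hYs
            constructor
            · rintro ⟨hs, hy⟩
              rw [hYs] at hy
              have hy' : Y n ω = -1 := by linarith
              have hs' : S n ω = (n:ℝ) - 2*(k:ℝ) := by
                rw [hSs, hYs, hy'] at hs
                push_cast at hs ⊢
                linarith
              exact Or.inr ⟨⟨hs', hy'⟩, h⟩
            · rintro (⟨⟨-, -⟩, h0⟩ | ⟨⟨hs, hy⟩, -⟩)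
              · omega
              · rw [hSs, hYs, hy]
                refine ⟨?_, by norm_num⟩
                push_cast
                push_cast at hs
                linarith
        rw [hset, measure_union (hdisj01 _ _)
          (((hAmeas n _ _)).inter (hWm1 (n+1) 1)),
          hinter, hinter, (ih k).1, (ih k).2, hμ0, hμ1,
          ← ENNReal.ofReal_mul (qcoin_nonneg n k),
          ← ENNReal.ofReal_mul (qcoin_nonneg n ((n:ℤ) - k)),
          ← ENNReal.ofReal_add (mul_nonneg (qcoin_nonneg n k) hp0)
            (mul_nonneg (qcoin_nonneg n ((n:ℤ) - k)) hp1')]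
        rw [qrec n hn k]
      · -- Y (n+1) = -1 case
        have hset : {ω | S (n+1) ω = ((n+1:ℕ):ℝ) - 2*(k:ℝ) ∧ Y (n+1) ω = -1}
            = ({ω | S n ω = (n:ℝ) - 2*((k-1:ℤ):ℝ) ∧ Y n ω = -1} ∩ {ω | W (n+1) ω = 0})
              ∪ ({ω | S n ω = (n:ℝ) - 2*((k-1:ℤ):ℝ) ∧ Y n ω = 1} ∩ {ω | W (n+1) ω = 1}) := by
          ext ω
          have hSs := hSstep n ω
          have hYs := hYstep n ω
          simp only [Set.mem_setOf_eq, Set.mem_union, Set.mem_inter_iff]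
          rcases hWrange (n+1) ω with h | h
          · rw [h] at hYs
            simp only [pow_zero, mul_one] at hYs
            constructor
            · rintro ⟨hs, hy⟩
              rw [hYs] at hy
              have hs' : S n ω = (n:ℝ) - 2*((k-1:ℤ):ℝ) := by
                rw [hSs, hYs, hy] at hs
                push_cast at hs ⊢
                linarith
              exact Or.inl ⟨⟨hs', hy⟩, h⟩
            · rintro (⟨⟨hs, hy⟩, -⟩ | ⟨⟨-, -⟩, h1⟩)
              · rw [hSs, hYs, hy]
                refine ⟨?_, rfl⟩
                push_cast
                push_cast at hs
                linarith
              · omega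
          · rw [h] at hYs
            simp only [pow_one, mul_neg_one] at hYs
            constructor
            · rintro ⟨hs, hy⟩
              rw [hYs] at hy
              have hy' : Y n ω = 1 := by linarith
              have hs' : S n ω = (n:ℝ) - 2*((k-1:ℤ):ℝ) := by
                rw [hSs, hYs, hy'] at hs
                push_cast at hs ⊢
                linarith
              exact Or.inr ⟨⟨hs', hy'⟩, h⟩
            · rintro (⟨⟨-, -⟩, h0⟩ | ⟨⟨hs, hy⟩, -⟩)
              · omega
              · rw [hSs, hYs, hy]
                refine ⟨?_, by norm_num⟩
                push_cast
                push_cast at hs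
                linarith
        have hiha := (ih (k-1)).1
        have hihb := (ih (k-1)).2
        rw [hset, measure_union (hdisj01 _ _)
          (((hAmeas n _ _)).inter (hWm1 (n+1) 1)),
          hinter, hinter, hiha, hihb, hμ0, hμ1,
          ← ENNReal.ofReal_mul (qcoin_nonneg n ((n:ℤ) - (k-1))),
          ← ENNReal.ofReal_mul (qcoin_nonneg n (k-1)),
          ← ENNReal.ofReal_add (mul_nonneg (qcoin_nonneg n ((n:ℤ) - (k-1))) hp0)
            (mul_nonneg (qcoin_nonneg n (k-1)) hp1')]
        have hq := qrec n hn ((n:ℤ) + 1 - k)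
        have h1 : (n:ℤ) - ((n:ℤ) + 1 - k) = k - 1 := by ring
        have h2 : ((n+1:ℕ):ℤ) - k = (n:ℤ) + 1 - k := by push_cast; ring
        have h3 : (n:ℤ) - (k-1) = (n:ℤ) + 1 - k := by ring
        rw [h2, hq, h1, h3]
  -- values of S
  have hSval : ∀ N ω, ∃ j : ℕ, j ≤ N ∧ S N ω = (N:ℝ) - 2*(j:ℝ) := by
    intro N
    induction N with
    | zero =>
      intro ω
      refine ⟨0, le_refl _, ?_⟩
      rw [hS]
      simp
    | succ n ihn =>
      intro ω
      obtain ⟨j, hj, hSj⟩ := ihn ω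
      rcases hYrange (n+1) ω with hy | hy
      · refine ⟨j, by omega, ?_⟩
        rw [hSstep, hSj, hy]
        push_cast
        ring
      · refine ⟨j+1, by omega, ?_⟩
        rw [hSstep, hSj, hy]
        push_cast
        ring
  -- marginal law of S N
  have hmarg : ∀ N, 1 ≤ N → ∀ j : ℕ, μ {ω | S N ω = (N:ℝ) - 2*(j:ℝ)}
      = ENNReal.ofReal (qcoin N j + qcoin N ((N:ℤ) - j)) := by
    intro N hN j
    have e := key N hN (j:ℤ)
    simp only [Int.cast_natCast] at e
    have hsplit : {ω | S N ω = (N:ℝ) - 2*(j:ℝ)}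
        = {ω | S N ω = (N:ℝ) - 2*(j:ℝ) ∧ Y N ω = 1}
          ∪ {ω | S N ω = (N:ℝ) - 2*(j:ℝ) ∧ Y N ω = -1} := by
      ext ω
      rcases hYrange N ω with h | h <;>
        simp only [Set.mem_union, Set.mem_setOf_eq, h] <;> norm_num
    have hd : Disjoint {ω | S N ω = (N:ℝ) - 2*(j:ℝ) ∧ Y N ω = 1}
        {ω | S N ω = (N:ℝ) - 2*(j:ℝ) ∧ Y N ω = -1} := by
      rw [Set.disjoint_left]
      rintro ω ⟨-, h1⟩ ⟨-, h2⟩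
      rw [h1] at h2
      norm_num at h2
    rw [hsplit, measure_union hd (hAmeas N _ _), e.1, e.2,
      ← ENNReal.ofReal_add (qcoin_nonneg _ _) (qcoin_nonneg _ _)]
  -- integral as finite sum
  have hintegral : ∀ N, 1 ≤ N → (∫ ω, f (S N ω / N) ∂μ)
      = ∑ j ∈ range (N+1), (qcoin N j + qcoin N ((N:ℤ) - j)) * f (((N:ℝ) - 2*j)/N) := by
    intro N hN
    have hfun : (fun ω => f (S N ω / N))
        = fun ω => ∑ j ∈ range (N+1),
            Set.indicator {ω' | S N ω' = (N:ℝ) - 2*(j:ℝ)}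
              (fun _ => f (((N:ℝ) - 2*(j:ℝ))/N)) ω := by
      funext ω
      obtain ⟨j0, hj0, hSj0⟩ := hSval N ω
      rw [Finset.sum_eq_single j0]
      · rw [Set.indicator_of_mem (by exact hSj0 : ω ∈ {ω' | S N ω' = (N:ℝ) - 2*(j0:ℝ)}),
          hSj0]
      · intro j hj hne
        apply Set.indicator_of_notMem
        intro hmem
        have hmem' : S N ω = (N:ℝ) - 2*(j:ℝ) := hmem
        rw [hSj0] at hmem'
        have hjj : (j:ℝ) = (j0:ℝ) := by linarith
        exact hne (by exact_mod_cast hjj)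
      · intro hj0n
        exact absurd (Finset.mem_range.mpr (by omega)) hj0n
    rw [hfun, MeasureTheory.integral_finset_sum]
    · refine Finset.sum_congr rfl fun j hj => ?_
      have hBmeas : MeasurableSet {ω' | S N ω' = (N:ℝ) - 2*(j:ℝ)} :=
        hSmeas N (measurableSet_singleton _)
      rw [MeasureTheory.integral_indicator_const _ hBmeas, measureReal_def, hmarg N hN j, smul_eq_mul,
        ENNReal.toReal_ofReal (add_nonneg (qcoin_nonneg _ _) (qcoin_nonneg _ _))]
    · intro j hj
      exact (MeasureTheory.integrable_const _).indicator
        (hSmeas N (measurableSet_singleton _))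
  have hlim := riemann_limit f
  refine Tendsto.congr' ?_ hlim
  filter_upwards [eventually_ge_atTop 1] with N hN
  exact (hintegral N hN).symm
end
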